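/- arXiv:math/0302193 — 5 statements merged into one kernel-verified Lean document; each statement's English description precedes it below -/
import Mathlib

section
/- For every n ≥ 1, there exists a nonnegative trigonometric polynomial φ(t) = 1 + λ cos(2πt) + ∑_{k=2}^{n} c_k cos(2πkt) with λ = 2cos(π/(n+2)), and no such nonnegative polynomial exists with λ > 2cos(π/(n+2)). -/
open Real

namespace CFAux
open Finset


lemma cf_tel (a d : ℝ) (N : ℕ) :
    (∑ j ∈ range N, Real.cos (a + j * d)) * (2 * Real.sin (d / 2))
      = Real.sin (a + N * d - d / 2) - Real.sin (a - d / 2) := by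
  have h := Finset.sum_range_sub (fun j : ℕ => Real.sin (a + j * d - d / 2)) N
  simp only [Nat.cast_zero, zero_mul, add_zero] at h
  rw [Finset.sum_mul, ← h]
  refine Finset.sum_congr rfl fun j _ => ?_
  rw [Real.sin_sub_sin]
  have h1 : (a + (↑(j+1) : ℝ) * d - d / 2 - (a + j * d - d / 2)) / 2 = d / 2 := by
    push_cast; ring
  have h2 : (a + (↑(j+1) : ℝ) * d - d / 2 + (a + j * d - d / 2)) / 2 = a + j * d := by
    push_cast; ring
  rw [h1, h2]; ring

lemma cf_sin_pos (n k : ℕ) (hk1 : 1 ≤ k) (hk2 : k ≤ n + 1) :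
    0 < Real.sin ((k : ℝ) * (π / ((n : ℝ) + 2))) := by
  have hn2 : (0:ℝ) < (n : ℝ) + 2 := by positivity
  apply Real.sin_pos_of_pos_of_lt_pi
  · have : (0:ℝ) < (k:ℝ) := by exact_mod_cast hk1
    positivity
  · have hk : (k : ℝ) < (n : ℝ) + 2 := by exact_mod_cast Nat.lt_of_le_of_lt hk2 (by omega)
    calc (k : ℝ) * (π / ((n : ℝ) + 2)) < ((n:ℝ)+2) * (π / ((n : ℝ) + 2)) := by
          apply mul_lt_mul_of_pos_right hk; positivity
      _ = π := by field_simp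

lemma cf_sum_zero (n k : ℕ) (hk1 : 1 ≤ k) (hk2 : k ≤ n + 1) :
    ∑ j ∈ range (n + 2), Real.cos ((k : ℝ) * (2 * (j:ℝ) + 1) * (π / ((n : ℝ) + 2))) = 0 := by
  set θ : ℝ := π / ((n : ℝ) + 2) with hθdef
  have hn2 : ((n:ℝ) + 2) ≠ 0 := by positivity
  have hθ : ((n:ℝ) + 2) * θ = π := by rw [hθdef]; field_simp
  have h := cf_tel ((k:ℝ) * θ) (2 * (k:ℝ) * θ) (n + 2)
  have e1 : ∑ j ∈ range (n + 2), Real.cos ((k : ℝ) * (2 * (j:ℝ) + 1) * θ)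
      = ∑ j ∈ range (n + 2), Real.cos ((k:ℝ) * θ + (j:ℝ) * (2 * (k:ℝ) * θ)) := by
    refine Finset.sum_congr rfl fun j _ => ?_; ring_nf
  have e2 : (2 * (k:ℝ) * θ) / 2 = (k:ℝ) * θ := by ring
  rw [e2] at h
  have e3 : (k:ℝ) * θ + (↑(n+2):ℝ) * (2 * (k:ℝ) * θ) - (k:ℝ) * θ = 2 * (k:ℝ) * (((n:ℝ)+2) * θ) := by
    push_cast; ring
  rw [e3, hθ] at h
  have e4 : Real.sin (2 * (k:ℝ) * π) = 0 := by
    have := Real.sin_nat_mul_pi (2 * k)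
    push_cast at this; linarith [this]
  have e5 : Real.sin ((k:ℝ) * θ - (k:ℝ) * θ) = 0 := by simp
  rw [e4, e5] at h
  have hs : Real.sin ((k:ℝ) * θ) ≠ 0 := ne_of_gt (cf_sin_pos n k hk1 hk2)
  rw [e1]
  have h0 : (∑ j ∈ range (n + 2), Real.cos ((k:ℝ) * θ + (j:ℝ) * (2 * (k:ℝ) * θ)))
      * (2 * Real.sin ((k:ℝ) * θ)) = 0 := by linarith [h]
  rcases mul_eq_zero.mp h0 with h' | h'
  · exact h'
  · exact absurd (by linarith [h'] : Real.sin ((k:ℝ) * θ) = 0) hs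

lemma cf_sinθ_pos (n : ℕ) : 0 < Real.sin (π / ((n : ℝ) + 2)) := by
  have := cf_sin_pos n 1 le_rfl (by omega)
  simpa using this

lemma cf_S1 (n : ℕ) :
    ∑ j ∈ range (n + 1), Real.cos ((2 * (j:ℝ) + 2) * (π / ((n : ℝ) + 2))) = -1 := by
  set θ : ℝ := π / ((n : ℝ) + 2) with hθdef
  have hn2 : ((n:ℝ) + 2) ≠ 0 := by positivity
  have hθ : ((n:ℝ) + 2) * θ = π := by rw [hθdef]; field_simp
  have hs : 0 < Real.sin θ := cf_sinθ_pos n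
  have h := cf_tel (2 * θ) (2 * θ) (n + 1)
  have e2 : (2 * θ) / 2 = θ := by ring
  rw [e2] at h
  have e3 : 2 * θ + (↑(n+1):ℝ) * (2 * θ) - θ = 2 * π - θ := by
    push_cast
    have : (2:ℝ) * π = 2 * (((n:ℝ)+2) * θ) := by rw [hθ]
    rw [this]; ring
  rw [e3] at h
  have e4 : Real.sin (2 * π - θ) = -Real.sin θ := by
    simp [Real.sin_sub, Real.sin_two_pi, Real.cos_two_pi]
  have e5 : Real.sin (2 * θ - θ) = Real.sin θ := by ring_nf
  rw [e4, e5] at h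
  have e1 : ∑ j ∈ range (n + 1), Real.cos ((2 * (j:ℝ) + 2) * θ)
      = ∑ j ∈ range (n + 1), Real.cos (2 * θ + (j:ℝ) * (2 * θ)) := by
    refine Finset.sum_congr rfl fun j _ => ?_; ring_nf
  rw [e1]
  have h0 : (∑ j ∈ range (n + 1), Real.cos (2 * θ + (j:ℝ) * (2 * θ)) - (-1))
      * (2 * Real.sin θ) = 0 := by ring_nf; ring_nf at h; linarith [h]
  rcases mul_eq_zero.mp h0 with h' | h'
  · linarith [h']
  · exact absurd (by linarith [h'] : Real.sin θ = 0) (ne_of_gt hs)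

lemma cf_S2 (n : ℕ) :
    ∑ i ∈ range n, Real.cos ((2 * (i:ℝ) + 3) * (π / ((n : ℝ) + 2)))
      = -2 * Real.cos (π / ((n : ℝ) + 2)) := by
  set θ : ℝ := π / ((n : ℝ) + 2) with hθdef
  have hn2 : ((n:ℝ) + 2) ≠ 0 := by positivity
  have hθ : ((n:ℝ) + 2) * θ = π := by rw [hθdef]; field_simp
  have hs : 0 < Real.sin θ := cf_sinθ_pos n
  have h := cf_tel (3 * θ) (2 * θ) n
  have e2 : (2 * θ) / 2 = θ := by ring
  rw [e2] at h
  have e3 : 3 * θ + (n:ℝ) * (2 * θ) - θ = 2 * π - 2 * θ := by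
    have : (2:ℝ) * π = 2 * (((n:ℝ)+2) * θ) := by rw [hθ]
    rw [this]; ring
  rw [e3] at h
  have e4 : Real.sin (2 * π - 2 * θ) = -Real.sin (2 * θ) := by
    simp [Real.sin_sub, Real.sin_two_pi, Real.cos_two_pi]
  have e5 : Real.sin (3 * θ - θ) = Real.sin (2 * θ) := by ring_nf
  rw [e4, e5] at h
  have e6 : Real.sin (2 * θ) = 2 * Real.sin θ * Real.cos θ := Real.sin_two_mul θ
  have e1 : ∑ i ∈ range n, Real.cos ((2 * (i:ℝ) + 3) * θ)
      = ∑ i ∈ range n, Real.cos (3 * θ + (i:ℝ) * (2 * θ)) := by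
    refine Finset.sum_congr rfl fun i _ => ?_; ring_nf
  rw [e1]
  have h0 : (∑ i ∈ range n, Real.cos (3 * θ + (i:ℝ) * (2 * θ)) - (-2 * Real.cos θ))
      * (2 * Real.sin θ) = 0 := by rw [e6] at h; ring_nf; ring_nf at h; linarith [h]
  rcases mul_eq_zero.mp h0 with h' | h'
  · linarith [h']
  · exact absurd (by linarith [h'] : Real.sin θ = 0) (ne_of_gt hs)

lemma cf_sq (a : ℕ → ℝ) (N : ℕ) (x : ℝ) :
    (∑ j ∈ range N, a j * Real.cos (j * x)) ^ 2 + (∑ j ∈ range N, a j * Real.sin (j * x)) ^ 2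
      = ∑ j ∈ range N, ∑ k ∈ range N, a j * a k * Real.cos (((j:ℝ) - k) * x) := by
  rw [sq, sq, Finset.sum_mul_sum, Finset.sum_mul_sum, ← Finset.sum_add_distrib]
  refine Finset.sum_congr rfl fun j _ => ?_
  rw [← Finset.sum_add_distrib]
  refine Finset.sum_congr rfl fun k _ => ?_
  have : ((j:ℝ) - k) * x = (j:ℝ) * x - (k:ℝ) * x := by ring
  rw [this, Real.cos_sub]; ring

lemma cf_double (a : ℕ → ℝ) (x : ℝ) (N : ℕ) :
    ∑ j ∈ range N, ∑ k ∈ range N, a j * a k * Real.cos (((j:ℝ) - k) * x)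
      = (∑ j ∈ range N, a j ^ 2)
        + 2 * ∑ m ∈ Ico 1 N, (∑ i ∈ range (N - m), a i * a (i + m)) * Real.cos ((m:ℝ) * x) := by
  induction N with
  | zero => simp
  | succ N ih =>
    have key : ∑ j ∈ range N, a j * a N * Real.cos (((N:ℝ) - j) * x)
        = ∑ m ∈ Ico 1 (N + 1), a (N - m) * a N * Real.cos ((m:ℝ) * x) := by
      refine Finset.sum_nbij' (fun j => N - j) (fun m => N - m) ?_ ?_ ?_ ?_ ?_
      · intro j hj; simp only [mem_range] at hj; simp only [mem_Ico]; omega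
      · intro m hm; simp only [mem_Ico] at hm; simp only [mem_range]; omega
      · intro j hj; simp only [mem_range] at hj; omega
      · intro m hm; simp only [mem_Ico] at hm; omega
      · intro j hj; simp only [mem_range] at hj
        have h1 : N - (N - j) = j := by omega
        have h2 : ((N - j : ℕ) : ℝ) = (N:ℝ) - j := by
          have : j ≤ N := by omega
          push_cast [this]; ring
        rw [h1, h2]
    simp only [Finset.sum_range_succ]
    rw [Finset.sum_add_distrib, ih]
    have hIco : ∑ m ∈ Ico 1 (N + 1), (∑ i ∈ range (N + 1 - m), a i * a (i + m)) * Real.cos ((m:ℝ) * x)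
        = ∑ m ∈ Ico 1 (N + 1), ((∑ i ∈ range (N - m), a i * a (i + m)) + a (N - m) * a N) * Real.cos ((m:ℝ) * x) := by
      refine Finset.sum_congr rfl fun m hm => ?_
      simp only [mem_Ico] at hm
      have h1 : N + 1 - m = (N - m) + 1 := by omega
      have h2 : N - m + m = N := by omega
      rw [h1, Finset.sum_range_succ, h2]
    -- RHS side manipulation
    have hsplit : ∑ m ∈ Ico 1 (N + 1), (∑ i ∈ range (N - m), a i * a (i + m)) * Real.cos ((m:ℝ) * x)
        = ∑ m ∈ Ico 1 N, (∑ i ∈ range (N - m), a i * a (i + m)) * Real.cos ((m:ℝ) * x) := by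
      rcases Nat.eq_zero_or_pos N with h | h
      · subst h; simp
      · rw [Finset.sum_Ico_succ_top (by omega : 1 ≤ N)]
        have : N - N = 0 := by omega
        simp [this]
    have hcos : ∀ j ∈ range N, a j * a N * Real.cos (((j:ℝ) - N) * x)
        = a j * a N * Real.cos (((N:ℝ) - j) * x) := by
      intro j _
      have : ((j:ℝ) - N) * x = -(((N:ℝ) - j) * x) := by ring
      rw [this, Real.cos_neg]
    rw [Finset.sum_congr rfl hcos]
    rw [hIco]
    simp only [add_mul, Finset.sum_add_distrib]
    rw [hsplit, ← key]
    have : Real.cos (((N:ℝ) - N) * x) = 1 := by norm_num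
    rw [this]
    have hcomm : ∑ k ∈ range N, a N * a k * Real.cos (((N:ℝ) - k) * x)
        = ∑ k ∈ range N, a k * a N * Real.cos (((N:ℝ) - k) * x) :=
      Finset.sum_congr rfl fun k _ => by ring
    rw [hcomm]
    ring

noncomputable def cf_a (n k : ℕ) : ℝ := Real.sin (((k:ℝ) + 1) * (π / ((n : ℝ) + 2)))

lemma cf_A (n : ℕ) : ∑ j ∈ range (n + 1), (cf_a n j) ^ 2 = ((n:ℝ) + 2) / 2 := by
  have h : ∀ j ∈ range (n + 1), (cf_a n j) ^ 2
      = 1 / 2 - Real.cos ((2 * (j:ℝ) + 2) * (π / ((n : ℝ) + 2))) / 2 := by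
    intro j _
    rw [cf_a, Real.sin_sq_eq_half_sub]
    congr 2
    ring
  rw [Finset.sum_congr rfl h]
  simp only [Finset.sum_sub_distrib, Finset.sum_const, Finset.card_range, nsmul_eq_mul]
  rw [← Finset.sum_div, cf_S1]
  push_cast
  ring

lemma cf_B (n : ℕ) : ∑ i ∈ range n, cf_a n i * cf_a n (i + 1)
    = ((n:ℝ) + 2) / 2 * Real.cos (π / ((n : ℝ) + 2)) := by
  set θ : ℝ := π / ((n : ℝ) + 2) with hθdef
  have h : ∀ i ∈ range n, cf_a n i * cf_a n (i + 1)
      = (Real.cos θ - Real.cos ((2 * (i:ℝ) + 3) * θ)) / 2 := by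
    intro i _
    have hc := Real.cos_sub_cos θ ((2 * (i:ℝ) + 3) * θ)
    have e1 : (θ + (2 * (i:ℝ) + 3) * θ) / 2 = ((i:ℝ) + 2) * θ := by ring
    have e2 : (θ - (2 * (i:ℝ) + 3) * θ) / 2 = -(((i:ℝ) + 1) * θ) := by ring
    rw [e1, e2, Real.sin_neg] at hc
    rw [cf_a, cf_a, ← hθdef]
    push_cast
    rw [hc]
    ring_nf
  rw [Finset.sum_congr rfl h]
  simp only [sub_div, Finset.sum_sub_distrib, Finset.sum_const, Finset.card_range, nsmul_eq_mul]
  rw [← Finset.sum_div, cf_S2]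
  push_cast
  ring

lemma cf_upper (n : ℕ) (hn : 1 ≤ n) (lam : ℝ) (c : ℕ → ℝ)
    (h : ∀ t : ℝ, 0 ≤ 1 + lam * Real.cos (2 * π * t) +
        ∑ k ∈ Finset.Icc 2 n, c k * Real.cos (2 * π * (k:ℝ) * t)) :
    ¬ (2 * Real.cos (π / ((n:ℝ) + 2)) < lam) := by
  intro hlt
  set θ : ℝ := π / ((n : ℝ) + 2) with hθdef
  have hn2 : (0:ℝ) < (n:ℝ) + 2 := by positivity
  have hθpos : 0 < θ := by rw [hθdef]; positivity
  have hθpi : ((n:ℝ)+2) * θ = π := by rw [hθdef]; field_simp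
  have hG : ∀ k : ℕ, 1 ≤ k → k ≤ n + 1 →
      ∑ j ∈ range (n + 2), Real.cos ((k : ℝ) * (2 * (j:ℝ) + 1) * θ) = 0 := by
    intro k hk1 hk2
    exact cf_sum_zero n k hk1 hk2
  set w : ℕ → ℝ := fun j => Real.cos θ - Real.cos ((2*(j:ℝ)+1) * θ) with hw
  -- weights nonneg
  have hwnn : ∀ j ∈ range (n+2), 0 ≤ w j := by
    intro j hj
    simp only [mem_range] at hj
    have hjn : (j:ℝ) ≤ (n:ℝ) + 1 := by
      have : j ≤ n + 1 := by omega
      exact_mod_cast this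
    rw [hw]
    simp only
    have hb1 : θ ≤ (2*(j:ℝ)+1) * θ := by nlinarith [(Nat.cast_nonneg j : (0:ℝ) ≤ (j:ℝ)), hθpos]
    have hb2 : (2*(j:ℝ)+1) * θ ≤ 2*π - θ := by nlinarith [hθpos]
    rcases le_or_gt ((2*(j:ℝ)+1) * θ) π with hc | hc
    · have := Real.cos_le_cos_of_nonneg_of_le_pi (le_of_lt hθpos) hc hb1
      linarith
    · have h2 : Real.cos ((2*(j:ℝ)+1)*θ) = Real.cos (2*π - (2*(j:ℝ)+1)*θ) :=
        (Real.cos_two_pi_sub _).symm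
      have hy1 : θ ≤ 2*π - (2*(j:ℝ)+1)*θ := by linarith
      have hy2 : 2*π - (2*(j:ℝ)+1)*θ ≤ π := by linarith
      have := Real.cos_le_cos_of_nonneg_of_le_pi (le_of_lt hθpos) hy2 hy1
      linarith
  -- W0
  have hW0 : ∑ j ∈ range (n+2), w j = ((n:ℝ)+2) * Real.cos θ := by
    rw [hw]
    simp only
    rw [Finset.sum_sub_distrib, Finset.sum_const, card_range]
    have e : ∀ j ∈ range (n+2), Real.cos ((2*(j:ℝ)+1) * θ)
        = Real.cos (((1:ℕ):ℝ) * (2*(j:ℝ)+1) * θ) := by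
      intro j _; norm_num
    rw [Finset.sum_congr rfl e, hG 1 le_rfl (by omega)]
    push_cast; ring
  -- W1
  have hW1 : ∑ j ∈ range (n+2), w j * Real.cos ((2*(j:ℝ)+1)*θ) = -(((n:ℝ)+2)/2) := by
    have e : ∀ j ∈ range (n+2), w j * Real.cos ((2*(j:ℝ)+1)*θ)
        = Real.cos θ * Real.cos (((1:ℕ):ℝ) * (2*(j:ℝ)+1) * θ)
          - (1/2 + Real.cos (((2:ℕ):ℝ) * (2*(j:ℝ)+1) * θ) / 2) := by
      intro j _
      rw [hw]
      simp only
      have hsq : Real.cos ((2*(j:ℝ)+1)*θ) ^ 2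
          = 1/2 + Real.cos (2 * ((2*(j:ℝ)+1)*θ)) / 2 := Real.cos_sq _
      have e2 : ((2:ℕ):ℝ) * (2*(j:ℝ)+1) * θ = 2 * ((2*(j:ℝ)+1)*θ) := by push_cast; ring
      have e1 : ((1:ℕ):ℝ) * (2*(j:ℝ)+1) * θ = (2*(j:ℝ)+1)*θ := by push_cast; ring
      rw [e1, e2, ← hsq]
      ring
    rw [Finset.sum_congr rfl e, Finset.sum_sub_distrib, ← Finset.mul_sum,
      hG 1 le_rfl (by omega), Finset.sum_add_distrib, Finset.sum_const, card_range,
      ← Finset.sum_div, hG 2 (by omega) (by omega)]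
    push_cast; ring
  -- Wk for 2 ≤ k ≤ n
  have hWk : ∀ k ∈ Icc 2 n, ∑ j ∈ range (n+2), w j * Real.cos ((k:ℝ)*(2*(j:ℝ)+1)*θ) = 0 := by
    intro k hk
    simp only [mem_Icc] at hk
    have e : ∀ j ∈ range (n+2), w j * Real.cos ((k:ℝ)*(2*(j:ℝ)+1)*θ)
        = Real.cos θ * Real.cos ((k:ℝ) * (2*(j:ℝ)+1) * θ)
          - (Real.cos (((k+1:ℕ):ℝ) * (2*(j:ℝ)+1) * θ) / 2
            + Real.cos (((k-1:ℕ):ℝ) * (2*(j:ℝ)+1) * θ) / 2) := by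
      intro j _
      rw [hw]
      simp only
      have hprod : Real.cos ((2*(j:ℝ)+1)*θ) * Real.cos ((k:ℝ)*(2*(j:ℝ)+1)*θ)
          = Real.cos (((k+1:ℕ):ℝ) * (2*(j:ℝ)+1) * θ) / 2
            + Real.cos (((k-1:ℕ):ℝ) * (2*(j:ℝ)+1) * θ) / 2 := by
        have hadd := Real.cos_add ((k:ℝ)*(2*(j:ℝ)+1)*θ) ((2*(j:ℝ)+1)*θ)
        have hsub := Real.cos_sub ((k:ℝ)*(2*(j:ℝ)+1)*θ) ((2*(j:ℝ)+1)*θ)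
        have e1 : ((k+1:ℕ):ℝ) * (2*(j:ℝ)+1) * θ
            = (k:ℝ)*(2*(j:ℝ)+1)*θ + (2*(j:ℝ)+1)*θ := by push_cast; ring
        have e2 : ((k-1:ℕ):ℝ) * (2*(j:ℝ)+1) * θ
            = (k:ℝ)*(2*(j:ℝ)+1)*θ - (2*(j:ℝ)+1)*θ := by
          have : ((k-1:ℕ):ℝ) = (k:ℝ) - 1 := by
            have : 1 ≤ k := by omega
            push_cast [this]; ring
          rw [this]; ring
        rw [e1, e2, hadd, hsub]
        ring
      rw [← hprod]
      ring
    rw [Finset.sum_congr rfl e, Finset.sum_sub_distrib, ← Finset.mul_sum,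
      hG k (by omega) (by omega), Finset.sum_add_distrib, ← Finset.sum_div, ← Finset.sum_div,
      hG (k+1) (by omega) (by omega), hG (k-1) (by omega) (by omega)]
    ring
  -- the quadrature sum
  set tp : ℕ → ℝ := fun j => (2*(j:ℝ)+1) / (2*((n:ℝ)+2)) with htp
  have hF : ∀ j : ℕ, 0 ≤ 1 + lam * Real.cos ((2*(j:ℝ)+1)*θ)
      + ∑ k ∈ Icc 2 n, c k * Real.cos ((k:ℝ)*(2*(j:ℝ)+1)*θ) := by
    intro j
    have ht := h (tp j)
    have e1 : 2 * π * tp j = (2*(j:ℝ)+1)*θ := by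
      rw [htp, hθdef]; field_simp
    have e2 : ∀ k ∈ Icc 2 n, c k * Real.cos (2 * π * (k:ℝ) * tp j)
        = c k * Real.cos ((k:ℝ)*(2*(j:ℝ)+1)*θ) := by
      intro k _
      have : 2 * π * (k:ℝ) * tp j = (k:ℝ)*(2*(j:ℝ)+1)*θ := by
        rw [htp, hθdef]; field_simp
      rw [this]
    rw [e1, Finset.sum_congr rfl e2] at ht
    exact ht
  have hS : 0 ≤ ∑ j ∈ range (n+2), w j * (1 + lam * Real.cos ((2*(j:ℝ)+1)*θ)
      + ∑ k ∈ Icc 2 n, c k * Real.cos ((k:ℝ)*(2*(j:ℝ)+1)*θ)) :=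
    Finset.sum_nonneg fun j hj => mul_nonneg (hwnn j hj) (hF j)
  have hSval : ∑ j ∈ range (n+2), w j * (1 + lam * Real.cos ((2*(j:ℝ)+1)*θ)
      + ∑ k ∈ Icc 2 n, c k * Real.cos ((k:ℝ)*(2*(j:ℝ)+1)*θ))
      = ((n:ℝ)+2) * Real.cos θ - lam * (((n:ℝ)+2)/2) := by
    have e : ∀ j ∈ range (n+2), w j * (1 + lam * Real.cos ((2*(j:ℝ)+1)*θ)
        + ∑ k ∈ Icc 2 n, c k * Real.cos ((k:ℝ)*(2*(j:ℝ)+1)*θ))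
        = w j + lam * (w j * Real.cos ((2*(j:ℝ)+1)*θ))
          + ∑ k ∈ Icc 2 n, c k * (w j * Real.cos ((k:ℝ)*(2*(j:ℝ)+1)*θ)) := by
      intro j _
      rw [mul_add, mul_add, Finset.mul_sum]
      have : ∀ k ∈ Icc 2 n, w j * (c k * Real.cos ((k:ℝ)*(2*(j:ℝ)+1)*θ))
          = c k * (w j * Real.cos ((k:ℝ)*(2*(j:ℝ)+1)*θ)) := by
        intro k _; ring
      rw [Finset.sum_congr rfl this]
      ring
    rw [Finset.sum_congr rfl e, Finset.sum_add_distrib, Finset.sum_add_distrib,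
      ← Finset.mul_sum, hW0, hW1, Finset.sum_comm]
    have hz : ∀ k ∈ Icc 2 n, ∑ j ∈ range (n+2), c k * (w j * Real.cos ((k:ℝ)*(2*(j:ℝ)+1)*θ)) = 0 := by
      intro k hk
      rw [← Finset.mul_sum, hWk k hk, mul_zero]
    rw [Finset.sum_congr rfl hz, Finset.sum_const, smul_zero]
    ring
  rw [hSval] at hS
  nlinarith [hS, hlt, hn2]



lemma cf_exists (n : ℕ) (hn : 1 ≤ n) :
    ∃ c : ℕ → ℝ, ∀ t : ℝ,
      0 ≤ 1 + (2 * Real.cos (π / ((n:ℝ) + 2))) * Real.cos (2 * π * t) +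
        ∑ k ∈ Finset.Icc 2 n, c k * Real.cos (2 * π * (k:ℝ) * t) := by
  set θ : ℝ := π / ((n : ℝ) + 2) with hθdef
  refine ⟨fun m => (4/((n:ℝ)+2)) * ∑ i ∈ range (n+1-m), cf_a n i * cf_a n (i+m), fun t => ?_⟩
  have hn2 : (0:ℝ) < (n:ℝ) + 2 := by positivity
  set x : ℝ := 2 * π * t with hxdef
  have key : (∑ j ∈ range (n+1), cf_a n j * Real.cos (j * x))^2
      + (∑ j ∈ range (n+1), cf_a n j * Real.sin (j * x))^2
      = ((n:ℝ)+2)/2 + 2 * (((n:ℝ)+2)/2 * Real.cos θ * Real.cos x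
          + ∑ m ∈ Icc 2 n, (∑ i ∈ range (n+1-m), cf_a n i * cf_a n (i+m)) * Real.cos ((m:ℝ)*x)) := by
    rw [cf_sq, cf_double, cf_A]
    have hio : Ico 1 (n+1) = insert 1 (Icc 2 n) := by
      ext m; simp only [mem_Ico, mem_insert, mem_Icc]; omega
    rw [hio, Finset.sum_insert (by simp)]
    have h11 : n + 1 - 1 = n := by omega
    rw [h11, cf_B]
    have hc1 : ((1:ℕ):ℝ) * x = x := by norm_num
    rw [hc1]
  have hRW : ∑ k ∈ Icc 2 n,
        (4/((n:ℝ)+2)) * (∑ i ∈ range (n+1-k), cf_a n i * cf_a n (i+k)) * Real.cos (2 * π * (k:ℝ) * t)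
      = (4/((n:ℝ)+2)) * ∑ m ∈ Icc 2 n,
          (∑ i ∈ range (n+1-m), cf_a n i * cf_a n (i+m)) * Real.cos ((m:ℝ)*x) := by
    rw [Finset.mul_sum]
    refine Finset.sum_congr rfl fun m hm => ?_
    have e : 2 * π * (m:ℝ) * t = (m:ℝ) * x := by rw [hxdef]; ring
    rw [e]; ring
  have hgoal : 1 + (2 * Real.cos θ) * Real.cos x +
      ∑ k ∈ Icc 2 n, (4/((n:ℝ)+2)) * (∑ i ∈ range (n+1-k), cf_a n i * cf_a n (i+k))
        * Real.cos (2 * π * (k:ℝ) * t)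
      = (2/((n:ℝ)+2)) * ((∑ j ∈ range (n+1), cf_a n j * Real.cos (j * x))^2
        + (∑ j ∈ range (n+1), cf_a n j * Real.sin (j * x))^2) := by
    rw [hRW, key]
    field_simp
    ring_nf
    simp only [mul_comm x]
  calc (0:ℝ) ≤ (2/((n:ℝ)+2)) * ((∑ j ∈ range (n+1), cf_a n j * Real.cos (j * x))^2
        + (∑ j ∈ range (n+1), cf_a n j * Real.sin (j * x))^2) := by positivity
    _ = _ := hgoal.symm
end CFAux

/-- Carathéodory–Fejér extremal problem: for every `n ≥ 1` there is a nonnegative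
trigonometric polynomial `1 + λ cos(2πt) + ∑_{k=2}^n c_k cos(2πkt)` with
`λ = 2 cos(π/(n+2))`, and no such nonnegative polynomial exists with a larger `λ`. -/
theorem caratheodory_fejer (n : ℕ) (hn : 1 ≤ n) :
    (∃ c : ℕ → ℝ, ∀ t : ℝ,
      0 ≤ 1 + (2 * Real.cos (π / (n + 2))) * Real.cos (2 * π * t) +
        ∑ k ∈ Finset.Icc 2 n, c k * Real.cos (2 * π * k * t)) ∧
    (∀ lam : ℝ, ∀ c : ℕ → ℝ,
      (∀ t : ℝ, 0 ≤ 1 + lam * Real.cos (2 * π * t) +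
        ∑ k ∈ Finset.Icc 2 n, c k * Real.cos (2 * π * k * t)) →
      ¬ (2 * Real.cos (π / (n + 2)) < lam)) :=
  ⟨CFAux.cf_exists n hn, fun lam c h => CFAux.cf_upper n hn lam c h⟩
end

section
/- For every n ≥ 1 and every nonnegative trigonometric polynomial φ(t) = 1 + λ cos(2πt) + ∑_{k=2}^{n} c_k cos(2πkt) on ℝ, one has λ ≤ 2cos(π/(n+2)). -/
open Real

set_option maxHeartbeats 1000000

/-- Sum of cosines at odd multiples vanishes: for `1 ≤ m < N`,
`∑_{j<N} cos (m (2j+1) π / N) = 0`. -/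
lemma sum_cos_odd_mul (N m : ℕ) (hm1 : 1 ≤ m) (hm2 : m < N) :
    ∑ j ∈ Finset.range N, Real.cos ((m : ℝ) * (2 * (j : ℝ) + 1) * π / N) = 0 := by
  have hN : (0 : ℝ) < (N : ℝ) := by
    have : 0 < N := lt_of_le_of_lt (Nat.zero_le m) hm2
    exact_mod_cast this
  have hs : Real.sin ((m : ℝ) * π / N) ≠ 0 := by
    apply ne_of_gt
    apply Real.sin_pos_of_pos_of_lt_pi
    · have hm : (0:ℝ) < (m:ℝ) := by exact_mod_cast hm1
      positivity
    · rw [div_lt_iff₀ hN]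
      have : (m : ℝ) < (N : ℝ) := by exact_mod_cast hm2
      nlinarith [Real.pi_pos]
  have key : ∑ j ∈ Finset.range N,
      (2 * Real.sin ((m : ℝ) * π / N)) * Real.cos ((m : ℝ) * (2 * (j : ℝ) + 1) * π / N)
      = 0 := by
    have tele : ∑ j ∈ Finset.range N,
        (Real.sin ((m : ℝ) * (2 * ((j : ℝ) + 1)) * π / N)
          - Real.sin ((m : ℝ) * (2 * (j : ℝ)) * π / N)) = 0 := by
      have := Finset.sum_range_sub (fun j : ℕ => Real.sin ((m : ℝ) * (2 * (j : ℝ)) * π / N)) N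
      have h1 : ∀ j : ℕ, ((j : ℝ) + 1) = ((j + 1 : ℕ) : ℝ) := by intro j; push_cast; ring
      rw [show (∑ j ∈ Finset.range N,
          (Real.sin ((m : ℝ) * (2 * ((j : ℝ) + 1)) * π / N)
            - Real.sin ((m : ℝ) * (2 * (j : ℝ)) * π / N)))
          = ∑ j ∈ Finset.range N,
          ((fun j : ℕ => Real.sin ((m : ℝ) * (2 * (j : ℝ)) * π / N)) (j + 1)
            - (fun j : ℕ => Real.sin ((m : ℝ) * (2 * (j : ℝ)) * π / N)) j) from by
          apply Finset.sum_congr rfl; intro j _; simp only; rw [h1 j]]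
      rw [this]
      have hend : (m : ℝ) * (2 * (N : ℝ)) * π / N = (2 * m : ℕ) * π := by
        push_cast; field_simp
      rw [hend, Real.sin_nat_mul_pi]
      norm_num
    rw [← tele]
    apply Finset.sum_congr rfl
    intro j _
    rw [Real.sin_sub_sin]
    have e1 : ((m : ℝ) * (2 * ((j : ℝ) + 1)) * π / N - (m : ℝ) * (2 * (j : ℝ)) * π / N) / 2
        = (m : ℝ) * π / N := by field_simp; ring
    have e2 : ((m : ℝ) * (2 * ((j : ℝ) + 1)) * π / N + (m : ℝ) * (2 * (j : ℝ)) * π / N) / 2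
        = (m : ℝ) * (2 * (j : ℝ) + 1) * π / N := by field_simp; ring
    rw [e1, e2]
  rw [← Finset.mul_sum] at key
  rcases mul_eq_zero.mp key with h | h
  · exact absurd h (mul_ne_zero two_ne_zero hs)
  · exact h

/-- Upper bound in the Fejér extremal problem: any nonnegative trigonometric
polynomial `1 + λ cos(2πt) + ∑_{k=2}^n c_k cos(2πkt)` has `λ ≤ 2 cos(π/(n+2))`. -/
theorem fejer_upper_bound (n : ℕ) (hn : 1 ≤ n) (lam : ℝ) (c : ℕ → ℝ)
    (hpos : ∀ t : ℝ, 0 ≤ 1 + lam * Real.cos (2 * π * t) +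
      ∑ k ∈ Finset.Icc 2 n, c k * Real.cos (2 * π * k * t)) :
    lam ≤ 2 * Real.cos (π / (n + 2)) := by
  set N : ℕ := n + 2 with hNdef
  have hN3 : 3 ≤ N := by omega
  have hNR : (0 : ℝ) < (N : ℝ) := by exact_mod_cast (by omega : 0 < N)
  have hN1 : (1 : ℝ) ≤ (N : ℝ) := by exact_mod_cast (by omega : 1 ≤ N)
  have hNne : (N : ℝ) ≠ 0 := ne_of_gt hNR
  set w : ℕ → ℝ := fun j => Real.cos (π / N) - Real.cos ((2 * (j : ℝ) + 1) * π / N) with hwdef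
  -- weights are nonnegative
  have hw : ∀ j ∈ Finset.range N, 0 ≤ w j := by
    intro j hj
    have hjN : j < N := Finset.mem_range.mp hj
    simp only [hwdef, sub_nonneg]
    have hπN : 0 < π / N := by positivity
    have hjR : (0:ℝ) ≤ (j : ℝ) := j.cast_nonneg
    by_cases hcase : 2 * j + 1 ≤ N
    · -- argument ≤ π
      apply Real.cos_le_cos_of_nonneg_of_le_pi (le_of_lt hπN)
      · rw [div_le_iff₀ hNR]
        have : (2 * (j:ℝ) + 1) ≤ (N : ℝ) := by exact_mod_cast hcase
        nlinarith [Real.pi_pos]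
      · rw [div_le_div_iff₀ hNR hNR]
        nlinarith [Real.pi_pos, mul_nonneg (mul_nonneg (mul_nonneg (by norm_num : (0:ℝ) ≤ 2) hjR) Real.pi_pos.le) hNR.le]
    · -- argument > π : use cos x = cos (2π − x)
      push_neg at hcase
      have harg : (2 * (j : ℝ) + 1) * π / N = 2 * π - (2 * ((N : ℝ) - 1 - j) + 1) * π / N := by
        field_simp; ring
      rw [harg, Real.cos_two_pi_sub]
      apply Real.cos_le_cos_of_nonneg_of_le_pi (le_of_lt hπN)
      · rw [div_le_iff₀ hNR]
        have hj' : (j : ℝ) < (N : ℝ) := by exact_mod_cast hjN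
        have h2 : (N : ℝ) < 2 * (j:ℝ) + 1 := by exact_mod_cast hcase
        nlinarith [Real.pi_pos]
      · rw [div_le_div_iff₀ hNR hNR]
        have hjle : (j:ℝ) ≤ (N:ℝ) - 1 := by
          have : (j:ℝ) + 1 ≤ (N:ℝ) := by exact_mod_cast hjN
          linarith
        nlinarith [Real.pi_pos, mul_nonneg (mul_nonneg
          (by linarith : (0:ℝ) ≤ (N:ℝ) - 1 - (j:ℝ)) Real.pi_pos.le) hNR.le]
  -- moment computations
  have hM0 : ∑ j ∈ Finset.range N, w j = N * Real.cos (π / N) := by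
    simp only [hwdef]
    rw [Finset.sum_sub_distrib, Finset.sum_const, Finset.card_range]
    have h1 := sum_cos_odd_mul N 1 le_rfl (by omega)
    have e : ∑ j ∈ Finset.range N, Real.cos ((2 * (j : ℝ) + 1) * π / N)
        = ∑ j ∈ Finset.range N, Real.cos (((1:ℕ) : ℝ) * (2 * (j : ℝ) + 1) * π / N) := by
      apply Finset.sum_congr rfl; intro j _; norm_num
    rw [e, h1]
    simp [nsmul_eq_mul]
  have hM1 : ∑ j ∈ Finset.range N, w j * Real.cos ((2 * (j : ℝ) + 1) * π / N)
      = -((N : ℝ) / 2) := by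
    simp only [hwdef, sub_mul]
    rw [Finset.sum_sub_distrib]
    have h1 := sum_cos_odd_mul N 1 le_rfl (by omega)
    have e1 : ∑ j ∈ Finset.range N, Real.cos (π / N) * Real.cos ((2 * (j : ℝ) + 1) * π / N)
        = Real.cos (π / N) *
          ∑ j ∈ Finset.range N, Real.cos (((1:ℕ):ℝ) * (2 * (j : ℝ) + 1) * π / N) := by
      rw [Finset.mul_sum]; apply Finset.sum_congr rfl; intro j _; norm_num
    rw [e1, h1, mul_zero, zero_sub, neg_inj]
    have e2 : ∀ j : ℕ, Real.cos ((2 * (j : ℝ) + 1) * π / N) * Real.cos ((2 * (j : ℝ) + 1) * π / N)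
        = 1 / 2 + Real.cos (((2:ℕ):ℝ) * (2 * (j : ℝ) + 1) * π / N) / 2 := by
      intro j
      rw [← sq, Real.cos_sq]
      congr 2
      push_cast
      ring_nf
    calc ∑ j ∈ Finset.range N,
          Real.cos ((2 * (j : ℝ) + 1) * π / N) * Real.cos ((2 * (j : ℝ) + 1) * π / N)
        = ∑ j ∈ Finset.range N,
          (1 / 2 + Real.cos (((2:ℕ):ℝ) * (2 * (j : ℝ) + 1) * π / N) / 2) :=
        Finset.sum_congr rfl (fun j _ => e2 j)
      _ = (N : ℝ) / 2 := by
        rw [Finset.sum_add_distrib, Finset.sum_const, Finset.card_range,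
          ← Finset.sum_div, sum_cos_odd_mul N 2 (by omega) (by omega)]
        simp [nsmul_eq_mul]
        ring
  have hMk : ∀ k ∈ Finset.Icc 2 n,
      ∑ j ∈ Finset.range N, w j * Real.cos ((k : ℝ) * (2 * (j : ℝ) + 1) * π / N) = 0 := by
    intro k hk
    obtain ⟨hk2, hkn⟩ := Finset.mem_Icc.mp hk
    simp only [hwdef, sub_mul]
    rw [Finset.sum_sub_distrib]
    have hk0 := sum_cos_odd_mul N k (by omega) (by omega)
    rw [← Finset.mul_sum, hk0, mul_zero, zero_sub, neg_eq_zero]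
    have e2 : ∀ j : ℕ, Real.cos ((2 * (j : ℝ) + 1) * π / N) *
          Real.cos ((k : ℝ) * (2 * (j : ℝ) + 1) * π / N)
        = (Real.cos (((k+1 : ℕ):ℝ) * (2 * (j : ℝ) + 1) * π / N)
          + Real.cos (((k-1 : ℕ):ℝ) * (2 * (j : ℝ) + 1) * π / N)) / 2 := by
      intro j
      have hc := Real.cos_add_cos (((k+1 : ℕ):ℝ) * (2 * (j : ℝ) + 1) * π / N)
        (((k-1 : ℕ):ℝ) * (2 * (j : ℝ) + 1) * π / N)
      have hcast1 : ((k+1 : ℕ):ℝ) = (k:ℝ) + 1 := by push_cast; ring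
      have hcast2 : ((k-1 : ℕ):ℝ) = (k:ℝ) - 1 := by
        have : 1 ≤ k := by omega
        push_cast [this]; ring
      rw [hcast1, hcast2] at hc
      have a1 : (((k:ℝ) + 1) * (2 * (j : ℝ) + 1) * π / N + ((k:ℝ) - 1) * (2 * (j : ℝ) + 1) * π / N) / 2
          = (k : ℝ) * (2 * (j : ℝ) + 1) * π / N := by field_simp; ring
      have a2 : (((k:ℝ) + 1) * (2 * (j : ℝ) + 1) * π / N - ((k:ℝ) - 1) * (2 * (j : ℝ) + 1) * π / N) / 2
          = (2 * (j : ℝ) + 1) * π / N := by field_simp; ring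
      rw [a1, a2] at hc
      rw [hcast1, hcast2, hc]
      ring
    rw [Finset.sum_congr rfl (fun j _ => e2 j), ← Finset.sum_div, Finset.sum_add_distrib,
      sum_cos_odd_mul N (k+1) (by omega) (by omega),
      sum_cos_odd_mul N (k-1) (by omega) (by omega)]
    norm_num
  -- nonnegativity of the quadrature sum
  have hSpos : 0 ≤ ∑ j ∈ Finset.range N, w j * (1 + lam * Real.cos ((2 * (j : ℝ) + 1) * π / N)
      + ∑ k ∈ Finset.Icc 2 n, c k * Real.cos ((k : ℝ) * (2 * (j : ℝ) + 1) * π / N)) := by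
    apply Finset.sum_nonneg
    intro j hj
    apply mul_nonneg (hw j hj)
    have h := hpos ((2 * (j : ℝ) + 1) / (2 * (N : ℝ)))
    have e1 : 2 * π * ((2 * (j : ℝ) + 1) / (2 * (N : ℝ))) = (2 * (j : ℝ) + 1) * π / N := by
      field_simp
    have e2 : ∀ k : ℕ, 2 * π * (k : ℝ) * ((2 * (j : ℝ) + 1) / (2 * (N : ℝ)))
        = (k : ℝ) * (2 * (j : ℝ) + 1) * π / N := by
      intro k; field_simp
    have e3 : (1 + lam * Real.cos ((2 * (j : ℝ) + 1) * π / N)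
        + ∑ k ∈ Finset.Icc 2 n, c k * Real.cos ((k : ℝ) * (2 * (j : ℝ) + 1) * π / N))
        = 1 + lam * Real.cos (2 * π * ((2 * (j : ℝ) + 1) / (2 * (N : ℝ))))
        + ∑ k ∈ Finset.Icc 2 n, c k * Real.cos (2 * π * (k : ℝ) * ((2 * (j : ℝ) + 1) / (2 * (N : ℝ)))) := by
      rw [e1]
      congr 1
      apply Finset.sum_congr rfl
      intro k _
      rw [e2 k]
    rw [e3]
    exact h
  -- expand the quadrature sum
  have hexp : ∑ j ∈ Finset.range N, w j * (1 + lam * Real.cos ((2 * (j : ℝ) + 1) * π / N)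
      + ∑ k ∈ Finset.Icc 2 n, c k * Real.cos ((k : ℝ) * (2 * (j : ℝ) + 1) * π / N))
      = (∑ j ∈ Finset.range N, w j)
        + lam * (∑ j ∈ Finset.range N, w j * Real.cos ((2 * (j : ℝ) + 1) * π / N))
        + ∑ k ∈ Finset.Icc 2 n, c k *
          (∑ j ∈ Finset.range N, w j * Real.cos ((k : ℝ) * (2 * (j : ℝ) + 1) * π / N)) := by
    calc ∑ j ∈ Finset.range N, w j * (1 + lam * Real.cos ((2 * (j : ℝ) + 1) * π / N)
          + ∑ k ∈ Finset.Icc 2 n, c k * Real.cos ((k : ℝ) * (2 * (j : ℝ) + 1) * π / N))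
        = ∑ j ∈ Finset.range N, (w j
            + lam * (w j * Real.cos ((2 * (j : ℝ) + 1) * π / N))
            + ∑ k ∈ Finset.Icc 2 n, c k * (w j * Real.cos ((k : ℝ) * (2 * (j : ℝ) + 1) * π / N))) := by
          apply Finset.sum_congr rfl
          intro j _
          rw [mul_add, mul_add, mul_one, Finset.mul_sum]
          congr 1
          · ring
          · exact Finset.sum_congr rfl (fun k _ => by ring)
      _ = (∑ j ∈ Finset.range N, w j)
            + (∑ j ∈ Finset.range N, lam * (w j * Real.cos ((2 * (j : ℝ) + 1) * π / N)))
            + ∑ j ∈ Finset.range N, ∑ k ∈ Finset.Icc 2 n,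
              c k * (w j * Real.cos ((k : ℝ) * (2 * (j : ℝ) + 1) * π / N)) := by
          rw [Finset.sum_add_distrib, Finset.sum_add_distrib]
      _ = (∑ j ∈ Finset.range N, w j)
            + lam * (∑ j ∈ Finset.range N, w j * Real.cos ((2 * (j : ℝ) + 1) * π / N))
            + ∑ k ∈ Finset.Icc 2 n, c k *
              (∑ j ∈ Finset.range N, w j * Real.cos ((k : ℝ) * (2 * (j : ℝ) + 1) * π / N)) := by
          congr 1
          · congr 1
            exact (Finset.mul_sum _ _ _).symm
          · rw [Finset.sum_comm]
            exact Finset.sum_congr rfl (fun k _ => (Finset.mul_sum _ _ _).symm)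
  have hzero : ∑ k ∈ Finset.Icc 2 n, c k *
      (∑ j ∈ Finset.range N, w j * Real.cos ((k : ℝ) * (2 * (j : ℝ) + 1) * π / N)) = 0 := by
    apply Finset.sum_eq_zero
    intro k hk
    rw [hMk k hk, mul_zero]
  rw [hexp, hM0, hM1, hzero, add_zero] at hSpos
  -- conclude
  have hNcast : π / ((n : ℝ) + 2) = π / (N : ℝ) := by
    rw [hNdef]; push_cast; ring
  rw [hNcast]
  nlinarith [hSpos, hNR, mul_pos hNR hNR]
end

section
/- For a singleton H = {n} with n ≥ 2, the supremum of λ over all nonnegative trigonometric polynomials of the form φ(t) = 1 + λ cos(2πt) + c cos(2πnt) equals 1/cos(π/(2n)). -/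
open Real

private lemma sin_theta_lb {n : ℕ} (hn : 2 ≤ n) : 1 / (n:ℝ) ≤ Real.sin (π / (2 * n)) := by
  have hn' : (2:ℝ) ≤ (n:ℝ) := by exact_mod_cast hn
  have hπ := Real.pi_pos
  have h1 : 2 / π * (π / (2 * n)) ≤ Real.sin (π / (2 * n)) := by
    apply Real.mul_le_sin (by positivity)
    rw [div_le_div_iff₀ (by positivity) (by norm_num)]
    nlinarith
  have h2 : 2 / π * (π / (2 * n)) = 1 / (n:ℝ) := by
    field_simp
  linarith [h2 ▸ h1]

private lemma L1 {n : ℕ} (hn : 2 ≤ n) {u : ℝ} (hu0 : 0 ≤ u) (hu1 : u ≤ π / (2 * n)) :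
    Real.sin u ≤ Real.sin (π / (2 * n)) * Real.sin (n * u) := by
  have hn' : (2:ℝ) ≤ (n:ℝ) := by exact_mod_cast hn
  have hπ := Real.pi_pos
  set θ := π / (2 * n) with hθ
  have hθpos : 0 < θ := by positivity
  have hsθ : 1 / (n:ℝ) ≤ Real.sin θ := sin_theta_lb hn
  have hderiv : ∀ x : ℝ, HasDerivAt (fun u => Real.sin θ * Real.sin (n * u) - Real.sin u)
      (Real.sin θ * (Real.cos (n * x) * n) - Real.cos x) x := by
    intro x
    have h1 : HasDerivAt (fun u : ℝ => Real.sin (n * u)) (Real.cos (n * x) * n) x := by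
      simpa [Function.comp_def] using (Real.hasDerivAt_sin ((n:ℝ) * x)).comp x ((hasDerivAt_id x).const_mul (n:ℝ))
    exact (h1.const_mul _).sub (Real.hasDerivAt_sin x)
  have hderiv2 : ∀ x : ℝ, HasDerivAt (fun x => Real.sin θ * (Real.cos (n * x) * n) - Real.cos x)
      (Real.sin θ * (-Real.sin (n * x) * n * n) - (-Real.sin x)) x := by
    intro x
    have h1 : HasDerivAt (fun u : ℝ => Real.cos (n * u)) (-Real.sin (n * x) * n) x := by
      simpa [Function.comp_def] using (Real.hasDerivAt_cos ((n:ℝ) * x)).comp x ((hasDerivAt_id x).const_mul (n:ℝ))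
    exact ((h1.mul_const (n:ℝ)).const_mul (Real.sin θ)).sub (Real.hasDerivAt_cos x)
  have hconc : ConcaveOn ℝ (Set.Icc 0 θ) (fun u => Real.sin θ * Real.sin (n * u) - Real.sin u) := by
    apply concaveOn_of_hasDerivWithinAt2_nonpos (convex_Icc 0 θ)
      (f' := fun x => Real.sin θ * (Real.cos (n * x) * n) - Real.cos x)
      (f'' := fun x => Real.sin θ * (-Real.sin (n * x) * n * n) - (-Real.sin x))
    · exact (Continuous.sub (continuous_const.mul
        (Real.continuous_sin.comp (continuous_const.mul continuous_id))) Real.continuous_sin).continuousOn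
    · intro x _; exact (hderiv x).hasDerivWithinAt
    · intro x _; exact (hderiv2 x).hasDerivWithinAt
    · intro x hx
      rw [interior_Icc] at hx
      obtain ⟨hx0, hx1⟩ := hx
      have hnx0 : 0 ≤ (n:ℝ) * x := by positivity
      have hnx1 : (n:ℝ) * x ≤ π / 2 := by
        calc (n:ℝ) * x ≤ (n:ℝ) * θ := by nlinarith
        _ = π / 2 := by rw [hθ]; field_simp
      have hj : 2 / π * ((n:ℝ) * x) ≤ Real.sin ((n:ℝ) * x) := Real.mul_le_sin hnx0 hnx1
      have hs1 : 0 ≤ Real.sin ((n:ℝ) * x) :=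
        Real.sin_nonneg_of_nonneg_of_le_pi hnx0 (by linarith)
      have hsx : Real.sin x ≤ x := Real.sin_le hx0.le
      have h3 : (1/(n:ℝ)) * ((2/π * ((n:ℝ)*x)) * n * n) ≤ Real.sin θ * (Real.sin ((n:ℝ)*x) * n * n) := by
        have hA : (2/π * ((n:ℝ)*x)) * n * n ≤ Real.sin ((n:ℝ)*x) * n * n := by
          apply mul_le_mul_of_nonneg_right _ (by positivity)
          exact mul_le_mul_of_nonneg_right hj (by positivity)
        exact mul_le_mul hsθ hA (by positivity) (le_trans (by positivity) hsθ)
      have h4 : (1/(n:ℝ)) * ((2/π * ((n:ℝ)*x)) * n * n) = 2 * (n:ℝ) * (n:ℝ) * x / π := by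
        field_simp
      have h5 : x ≤ 2 * (n:ℝ) * (n:ℝ) * x / π := by
        rw [le_div_iff₀ hπ]
        nlinarith [Real.pi_le_four, hx0.le]
      have key : Real.sin x ≤ Real.sin θ * (Real.sin ((n:ℝ) * x) * n * n) := by
        calc Real.sin x ≤ x := hsx
        _ ≤ 2 * (n:ℝ) * (n:ℝ) * x / π := h5
        _ = (1/(n:ℝ)) * ((2/π * ((n:ℝ)*x)) * n * n) := h4.symm
        _ ≤ _ := h3
      nlinarith [key]
  have h0 : Real.sin θ * Real.sin ((n:ℝ) * 0) - Real.sin 0 = 0 := by simp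
  have hθv : Real.sin θ * Real.sin ((n:ℝ) * θ) - Real.sin θ = 0 := by
    have hnθ : (n:ℝ) * θ = π / 2 := by rw [hθ]; field_simp
    rw [hnθ, Real.sin_pi_div_two, mul_one, sub_self]
  have ha : (0:ℝ) ≤ 1 - u / θ := by
    have : u / θ ≤ 1 := by rw [div_le_one hθpos]; exact hu1
    linarith
  have hb : (0:ℝ) ≤ u / θ := by positivity
  have hab : (1 - u / θ) + u / θ = 1 := by ring
  have hcomb := hconc.2 (Set.left_mem_Icc.2 hθpos.le) (Set.right_mem_Icc.2 hθpos.le) ha hb hab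
  have heq : (1 - u / θ) • (0:ℝ) + (u / θ) • θ = u := by
    rw [smul_eq_mul, smul_eq_mul, mul_zero, zero_add, div_mul_cancel₀ u hθpos.ne']
  rw [heq] at hcomb
  simp only [smul_eq_mul] at hcomb
  have : 0 ≤ Real.sin θ * Real.sin ((n:ℝ) * u) - Real.sin u := by
    calc (0:ℝ) = (1 - u/θ) * (Real.sin θ * Real.sin ((n:ℝ) * 0) - Real.sin 0)
        + (u/θ) * (Real.sin θ * Real.sin ((n:ℝ) * θ) - Real.sin θ) := by rw [h0, hθv]; ring
    _ ≤ _ := by simpa using hcomb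
  linarith

private lemma keyIcc {n : ℕ} (hn : 2 ≤ n) {y : ℝ} (hy0 : 0 ≤ y) (hy1 : y ≤ π) :
    0 ≤ (n:ℝ) * Real.cos (π / (2 * n)) - n * Real.cos y
      + Real.sin (π / (2 * n)) * Real.cos (n * y) := by
  have hn' : (2:ℝ) ≤ (n:ℝ) := by exact_mod_cast hn
  have hπ := Real.pi_pos
  set θ := π / (2 * n) with hθdef
  have hθpos : 0 < θ := by positivity
  have hθ4 : θ ≤ π / 4 := by
    rw [hθdef, div_le_div_iff₀ (by positivity) (by norm_num)]
    nlinarith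
  have hθ2 : θ < π / 2 := by linarith
  have hsθ0 : 0 ≤ Real.sin θ := Real.sin_nonneg_of_nonneg_of_le_pi hθpos.le (by linarith)
  have hcθ : Real.cos (π/4) ≤ Real.cos θ :=
    Real.cos_le_cos_of_nonneg_of_le_pi hθpos.le (by linarith) hθ4
  have hcθ' : Real.sqrt 2 / 2 ≤ Real.cos θ := by rwa [Real.cos_pi_div_four] at hcθ
  have hsqrt2 : (1:ℝ) ≤ Real.sqrt 2 := by
    rw [show (1:ℝ) = Real.sqrt 1 by simp]
    exact Real.sqrt_le_sqrt (by norm_num)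
  have hnθ : (n:ℝ) * θ = π / 2 := by rw [hθdef]; field_simp
  have hFθ : (n:ℝ) * Real.cos θ - n * Real.cos θ + Real.sin θ * Real.cos ((n:ℝ) * θ) = 0 := by
    rw [hnθ, Real.cos_pi_div_two]; ring
  have hderiv : ∀ x : ℝ, HasDerivAt
      (fun y => (n:ℝ) * Real.cos θ - n * Real.cos y + Real.sin θ * Real.cos (n * y))
      ((n:ℝ) * Real.sin x + Real.sin θ * (-Real.sin ((n:ℝ) * x) * n)) x := by
    intro x
    have h1 : HasDerivAt (fun u : ℝ => Real.cos (n * u)) (-Real.sin ((n:ℝ) * x) * n) x := by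
      simpa [Function.comp_def] using (Real.hasDerivAt_cos ((n:ℝ) * x)).comp x ((hasDerivAt_id x).const_mul (n:ℝ))
    have h2 : HasDerivAt (fun y : ℝ => (n:ℝ) * Real.cos θ - n * Real.cos y)
        ((n:ℝ) * Real.sin x) x := by
      simpa [Pi.sub_def] using (hasDerivAt_const x ((n:ℝ) * Real.cos θ)).sub
        ((Real.hasDerivAt_cos x).const_mul (n:ℝ))
    exact h2.add (h1.const_mul _)
  have hcont : Continuous
      (fun y => (n:ℝ) * Real.cos θ - n * Real.cos y + Real.sin θ * Real.cos (n * y)) :=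
    ((continuous_const.sub (continuous_const.mul Real.continuous_cos)).add
      (continuous_const.mul (Real.continuous_cos.comp (continuous_const.mul continuous_id))))
  rcases le_or_gt y θ with hc1 | hc1
  · -- antitone on [0, θ]
    have hanti : AntitoneOn
        (fun y => (n:ℝ) * Real.cos θ - n * Real.cos y + Real.sin θ * Real.cos (n * y))
        (Set.Icc 0 θ) := by
      apply antitoneOn_of_deriv_nonpos (convex_Icc 0 θ) hcont.continuousOn
      · intro x _; exact (hderiv x).differentiableAt.differentiableWithinAt
      · intro x hx
        rw [interior_Icc] at hx
        rw [(hderiv x).deriv]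
        have := L1 hn hx.1.le (by linarith [hx.2])
        nlinarith [this]
    have := hanti (Set.mem_Icc.2 ⟨hy0, hc1⟩) (Set.right_mem_Icc.2 hθpos.le) hc1
    simp only at this
    linarith [hFθ ▸ this]
  rcases le_or_gt y (π - θ) with hc2 | hc2
  · -- monotone on [θ, π - θ]
    have hmono : MonotoneOn
        (fun y => (n:ℝ) * Real.cos θ - n * Real.cos y + Real.sin θ * Real.cos (n * y))
        (Set.Icc θ (π - θ)) := by
      apply monotoneOn_of_deriv_nonneg (convex_Icc θ (π - θ)) hcont.continuousOn
      · intro x _; exact (hderiv x).differentiableAt.differentiableWithinAt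
      · intro x hx
        rw [interior_Icc] at hx
        rw [(hderiv x).deriv]
        have hsy : Real.sin θ ≤ Real.sin x := by
          rcases le_or_gt x (π / 2) with hx2 | hx2
          · exact Real.sin_le_sin_of_le_of_le_pi_div_two (by linarith) hx2 hx.1.le
          · rw [← Real.sin_pi_sub x]
            exact Real.sin_le_sin_of_le_of_le_pi_div_two (by linarith) (by linarith)
              (by linarith [hx.2])
        have hs1 : Real.sin ((n:ℝ) * x) ≤ 1 := Real.sin_le_one _
        nlinarith [mul_le_mul_of_nonneg_left hs1 hsθ0]
    have := hmono (Set.left_mem_Icc.2 (by linarith)) (Set.mem_Icc.2 ⟨hc1.le, hc2⟩) hc1.le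
    simp only at this
    linarith [hFθ ▸ this]
  · -- y ∈ [π - θ, π]
    have hcy : Real.cos y ≤ Real.cos (π - θ) :=
      Real.cos_le_cos_of_nonneg_of_le_pi (by linarith) hy1 hc2.le
    rw [Real.cos_pi_sub] at hcy
    have hcn : -1 ≤ Real.cos ((n:ℝ) * y) := Real.neg_one_le_cos _
    have hsθ1 : Real.sin θ ≤ 1 := Real.sin_le_one _
    have h1 : Real.sin θ * (-1) ≤ Real.sin θ * Real.cos ((n:ℝ) * y) :=
      mul_le_mul_of_nonneg_left hcn hsθ0
    have h2 : (n:ℝ) * Real.cos y ≤ (n:ℝ) * (-Real.cos θ) :=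
      mul_le_mul_of_nonneg_left hcy (by positivity)
    nlinarith [hcθ', hsqrt2]

private lemma keyAll {n : ℕ} (hn : 2 ≤ n) (y : ℝ) :
    0 ≤ (n:ℝ) * Real.cos (π / (2 * n)) - n * Real.cos y
      + Real.sin (π / (2 * n)) * Real.cos (n * y) := by
  have hπ := Real.pi_pos
  set k : ℤ := round (y / (2 * π)) with hk
  set z : ℝ := |y - 2 * π * k| with hz
  have hz0 : 0 ≤ z := abs_nonneg _
  have hz1 : z ≤ π := by
    have h1 : |y / (2 * π) - k| ≤ 1 / 2 := abs_sub_round _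
    have h2 : y - 2 * π * k = (2 * π) * (y / (2 * π) - k) := by field_simp
    rw [hz, h2, abs_mul, abs_of_pos (by positivity : (0:ℝ) < 2 * π)]
    nlinarith
  have hcz : Real.cos z = Real.cos y := by
    rw [hz, Real.cos_abs, show y - 2 * π * k = y + (-k : ℤ) * (2 * π) by push_cast; ring,
      Real.cos_add_int_mul_two_pi]
  have hcnz : Real.cos ((n:ℝ) * z) = Real.cos ((n:ℝ) * y) := by
    have : (n:ℝ) * z = |(n:ℝ) * (y - 2 * π * k)| := by
      rw [hz, abs_mul, abs_of_nonneg (by positivity : (0:ℝ) ≤ (n:ℝ))]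
    rw [this, Real.cos_abs,
      show (n:ℝ) * (y - 2 * π * k) = (n:ℝ) * y + (-(n * k) : ℤ) * (2 * π) by push_cast; ring,
      Real.cos_add_int_mul_two_pi]
  have := keyIcc hn hz0 hz1
  rw [hcz, hcnz] at this
  exact this

/-- For `H = {n}` with `n ≥ 2`, the supremum of `λ` over nonnegative trigonometric
polynomials `φ(t) = 1 + λ cos(2πt) + c cos(2πnt)` equals `1 / cos(π/(2n))`. -/
theorem turanM_singleton (n : ℕ) (hn : 2 ≤ n) :
    sSup {lam : ℝ | ∃ c : ℝ, ∀ t : ℝ,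
        0 ≤ 1 + lam * Real.cos (2 * π * t) + c * Real.cos (2 * π * n * t)}
      = 1 / Real.cos (π / (2 * n)) := by
  have hn' : (2:ℝ) ≤ (n:ℝ) := by exact_mod_cast hn
  have hπ := Real.pi_pos
  set θ := π / (2 * n) with hθdef
  have hθpos : 0 < θ := by positivity
  have hθ2 : θ < π / 2 := by
    rw [hθdef, div_lt_div_iff₀ (by positivity) (by norm_num)]
    nlinarith
  have hcθ : 0 < Real.cos θ := Real.cos_pos_of_mem_Ioo ⟨by linarith, hθ2⟩
  -- upper bound
  have hub : ∀ lam ∈ {lam : ℝ | ∃ c : ℝ, ∀ t : ℝ,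
      0 ≤ 1 + lam * Real.cos (2 * π * t) + c * Real.cos (2 * π * n * t)},
      lam ≤ 1 / Real.cos θ := by
    rintro lam ⟨c, hc⟩
    have ht := hc ((1:ℝ)/2 - 1/(4*n))
    have e1 : 2 * π * ((1:ℝ)/2 - 1/(4*n)) = π - θ := by
      rw [hθdef]; field_simp; ring
    have e2 : 2 * π * (n:ℝ) * ((1:ℝ)/2 - 1/(4*n)) = (n:ℝ) * π - π/2 := by
      field_simp; ring
    rw [e1, e2, Real.cos_pi_sub, Real.cos_nat_mul_pi_sub, Real.cos_pi_div_two, mul_zero,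
      mul_zero, add_zero] at ht
    rw [le_div_iff₀ hcθ]
    nlinarith
  -- membership of the extremal value
  have hmem : (1 / Real.cos θ) ∈ {lam : ℝ | ∃ c : ℝ, ∀ t : ℝ,
      0 ≤ 1 + lam * Real.cos (2 * π * t) + c * Real.cos (2 * π * n * t)} := by
    refine ⟨(-1:ℝ)^n * (Real.sin θ / (n * Real.cos θ)), fun t => ?_⟩
    set y := 2 * π * t - π with hydef
    have h1 : Real.cos (2 * π * t) = -Real.cos y := by
      rw [show (2 * π * t) = y + π by rw [hydef]; ring, Real.cos_add_pi]
    have h2 : Real.cos (2 * π * (n:ℝ) * t) = (-1)^n * Real.cos ((n:ℝ) * y) := by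
      rw [show 2 * π * (n:ℝ) * t = (n:ℝ) * π - (-((n:ℝ) * y)) by rw [hydef]; ring,
        Real.cos_nat_mul_pi_sub, Real.cos_neg]
    have hsq : ((-1:ℝ))^(n*2) = 1 := Even.neg_one_pow ⟨n, by ring⟩
    have hF := keyAll hn y
    have hexp : 1 + (1 / Real.cos θ) * Real.cos (2 * π * t)
        + ((-1:ℝ)^n * (Real.sin θ / (n * Real.cos θ))) * Real.cos (2 * π * (n:ℝ) * t)
        = ((n:ℝ) * Real.cos θ - n * Real.cos y + Real.sin θ * Real.cos ((n:ℝ) * y))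
          / ((n:ℝ) * Real.cos θ) := by
      rw [h1, h2]
      have hne1 : (n:ℝ) ≠ 0 := by linarith
      have hne2 : Real.cos θ ≠ 0 := ne_of_gt hcθ
      field_simp
      linear_combination (Real.sin θ * Real.cos ((n:ℝ) * y)) * hsq
    rw [hexp]
    positivity
  apply le_antisymm
  · exact csSup_le ⟨_, hmem⟩ hub
  · exact le_csSup ⟨_, hub⟩ hmem
end

section
/- For H = {n ∈ ℕ : n ≥ 2, n ≠ m} (all integers ≥ 2 except a fixed m ≥ 2), the supremum of λ over nonnegative trigonometric polynomials φ(t) = 1 + λ cos(2πt) + ∑_{k∈H} c_k cos(2πkt) equals 2cos(π/(2m)). -/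
open Real

open Finset

namespace TuranAux

/-- ∫₀¹ cos(2πz t) dt -/
lemma integral_cos_two_pi_int (z : ℤ) :
    ∫ t in (0:ℝ)..1, Real.cos (2*π*z*t) = if z = 0 then 1 else 0 := by
  rcases eq_or_ne z 0 with hz | hz
  · simp [hz]
  · have hc : (2*π*(z:ℝ)) ≠ 0 := by
      have : (z:ℝ) ≠ 0 := Int.cast_ne_zero.mpr hz
      have := Real.pi_ne_zero
      positivity
    rw [if_neg hz]
    rw [intervalIntegral.integral_comp_mul_left (fun x => Real.cos x) hc]
    rw [integral_cos]
    have h1 : Real.sin (2*π*(z:ℝ)*1) = 0 := by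
      have : (2*π*(z:ℝ)*1) = ((2*z : ℤ):ℝ) * π := by push_cast; ring
      rw [this, Real.sin_int_mul_pi]
    have h2 : Real.sin (2*π*(z:ℝ)*0) = 0 := by norm_num
    rw [h1, h2]
    simp

lemma integral_cos_mul_cos (j k : ℕ) :
    ∫ t in (0:ℝ)..1, Real.cos (2*π*j*t) * Real.cos (2*π*k*t)
      = if j = k then (if j = 0 then 1 else 1/2) else 0 := by
  have key : ∀ t:ℝ, Real.cos (2*π*j*t) * Real.cos (2*π*k*t)
      = (Real.cos (2*π*(((j:ℤ)-k : ℤ):ℝ)*t) + Real.cos (2*π*(((j:ℤ)+k : ℤ):ℝ)*t))/2 := by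
    intro t
    have e1 : (2*π*(((j:ℤ)-k : ℤ):ℝ)*t : ℝ) = 2*π*j*t - 2*π*k*t := by push_cast; ring
    have e2 : (2*π*(((j:ℤ)+k : ℤ):ℝ)*t : ℝ) = 2*π*j*t + 2*π*k*t := by push_cast; ring
    rw [e1, e2, Real.cos_sub, Real.cos_add]; ring
  have hcont : ∀ z : ℤ, IntervalIntegrable (fun t:ℝ => Real.cos (2*π*(z:ℝ)*t)) MeasureTheory.volume 0 1 := by
    intro z
    apply Continuous.intervalIntegrable
    fun_prop
  rw [intervalIntegral.integral_congr (fun t _ => key t)]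
  rw [intervalIntegral.integral_div, intervalIntegral.integral_add (hcont _) (hcont _),
    integral_cos_two_pi_int, integral_cos_two_pi_int]
  rcases eq_or_ne j k with rfl | hjk
  · rcases eq_or_ne j 0 with rfl | hj
    · norm_num
    · have h1 : ((j:ℤ) - j) = 0 := by ring
      have h2 : ((j:ℤ) + j) ≠ 0 := by
        simpa using fun h => hj (by omega)
      rw [if_pos h1, if_neg h2, if_pos rfl, if_neg hj]
      norm_num
  · have h1 : ((j:ℤ) - k) ≠ 0 := by
      intro h; exact hjk (by omega)
    have h2 : ((j:ℤ) + k) ≠ 0 := by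
      intro h
      have hj0 : j = 0 := by omega
      have hk0 : k = 0 := by omega
      exact hjk (hj0.trans hk0.symm)
    rw [if_neg h1, if_neg h2, if_neg hjk]
    norm_num

/-- Fejér kernel expansion. -/
lemma fejer_expansion (n : ℕ) (x : ℝ) :
    (∑ j ∈ range n, Real.cos (j*x))^2 + (∑ j ∈ range n, Real.sin (j*x))^2
      = n + ∑ k ∈ Ico 1 n, 2*((n:ℝ)-k)*Real.cos (k*x) := by
  induction n with
  | zero => simp
  | succ n ih =>
    rcases Nat.eq_zero_or_pos n with rfl | hn
    · norm_num
    · have hcross : (∑ j ∈ range n, Real.cos (j*x)) * Real.cos (n*x)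
          + (∑ j ∈ range n, Real.sin (j*x)) * Real.sin (n*x)
          = ∑ k ∈ Ico 1 (n+1), Real.cos (k*x) := by
        rw [Finset.sum_mul, Finset.sum_mul, ← Finset.sum_add_distrib]
        have step : ∀ j ∈ range n, Real.cos (j*x)*Real.cos (n*x) + Real.sin (j*x)*Real.sin (n*x)
            = Real.cos (((n - j : ℕ):ℝ)*x) := by
          intro j hj
          have hc : ((n - j : ℕ):ℝ) = (n:ℝ) - j := by
            rw [Nat.cast_sub (le_of_lt (mem_range.mp hj))]
          rw [hc, sub_mul, Real.cos_sub]; ring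
        rw [Finset.sum_congr rfl step]
        rw [Finset.sum_Ico_eq_sum_range]
        have refl2 := Finset.sum_range_reflect (fun j => Real.cos (((j+1 : ℕ):ℝ)*x)) n
        have l1 : ∀ j ∈ range n, Real.cos (((n - j : ℕ):ℝ)*x) = (fun j => Real.cos (((j+1 : ℕ):ℝ)*x)) (n - 1 - j) := by
          intro j hj
          have hj' := mem_range.mp hj
          have he : n - j = n - 1 - j + 1 := by omega
          rw [he]
        rw [Finset.sum_congr rfl l1, refl2]
        simp only [Nat.add_sub_cancel]
        apply Finset.sum_congr rfl
        intro j _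
        have he : j + 1 = 1 + j := by omega
        rw [he]
      have hsplit : ∑ k ∈ Ico 1 (n+1), 2*(((n:ℝ)+1)-(k:ℝ))*Real.cos (k*x)
          = (∑ k ∈ Ico 1 n, 2*((n:ℝ)-k)*Real.cos (k*x)) + 2*∑ k ∈ Ico 1 (n+1), Real.cos (k*x) := by
        have e1 : ∀ k ∈ Ico 1 (n+1), 2*(((n:ℝ)+1)-(k:ℝ))*Real.cos (k*x)
            = 2*((n:ℝ)-k)*Real.cos (k*x) + 2*Real.cos (k*x) := by
          intro k _; ring
        rw [Finset.sum_congr rfl e1, Finset.sum_add_distrib, Finset.mul_sum]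
        congr 1
        rw [Finset.sum_Ico_succ_top hn]
        simp
      rw [Finset.sum_range_succ, Finset.sum_range_succ, add_sq, add_sq]
      have hpy := Real.sin_sq_add_cos_sq ((n:ℝ)*x)
      push_cast
      push_cast at hsplit ih hcross
      rw [hsplit]
      nlinarith [ih, hcross, hpy]

lemma abs_sin_nat_mul_le (n : ℕ) (x : ℝ) : |Real.sin (n*x)| ≤ n * |Real.sin x| := by
  induction n with
  | zero => simp
  | succ n ih =>
    have he : ((n+1 : ℕ):ℝ)*x = (n:ℝ)*x + x := by push_cast; ring
    rw [he, Real.sin_add]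
    calc |Real.sin ((n:ℝ)*x) * Real.cos x + Real.cos ((n:ℝ)*x) * Real.sin x|
        ≤ |Real.sin ((n:ℝ)*x) * Real.cos x| + |Real.cos ((n:ℝ)*x) * Real.sin x| := abs_add_le _ _
      _ ≤ |Real.sin ((n:ℝ)*x)| * 1 + 1 * |Real.sin x| := by
          rw [abs_mul, abs_mul]
          gcongr <;> first | exact Real.abs_cos_le_one _ | skip
      _ ≤ (n:ℝ) * |Real.sin x| + 1 * |Real.sin x| := by
          have := abs_nonneg (Real.sin x)
          nlinarith [ih]
      _ = ((n+1 : ℕ):ℝ) * |Real.sin x| := by push_cast; ring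

/-- `sin(ks) cos s - k cos(ks) sin s ≥ 0` for `0 ≤ s`, `ks ≤ π/2`. -/
lemma chord (s : ℝ) (hs : 0 ≤ s) :
    ∀ (k:ℕ), (k:ℝ)*s ≤ π/2 → (k:ℝ)*Real.cos ((k:ℝ)*s) * Real.sin s ≤ Real.sin ((k:ℝ)*s) * Real.cos s := by
  intro k
  induction k with
  | zero => simp
  | succ k ih =>
    intro h
    have hk1 : (0:ℝ) ≤ (k:ℝ) := Nat.cast_nonneg k
    have hsle : s ≤ ((k:ℝ)+1)*s := by nlinarith
    have hkse : (k:ℝ)*s ≤ ((k:ℝ)+1)*s := by nlinarith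
    have hcast : ((k+1:ℕ):ℝ) = (k:ℝ)+1 := by push_cast; ring
    rw [hcast] at h ⊢
    have hks : (k:ℝ)*s ≤ π/2 := le_trans hkse h
    have hspi : s ≤ π/2 := le_trans hsle h
    have hcs : 0 ≤ Real.cos s := Real.cos_nonneg_of_mem_Icc ⟨by linarith [Real.pi_pos], hspi⟩
    have hsks : 0 ≤ Real.sin ((k:ℝ)*s) := by
      apply Real.sin_nonneg_of_nonneg_of_le_pi
      · positivity
      · linarith [Real.pi_pos]
    have hss : 0 ≤ Real.sin s := by
      apply Real.sin_nonneg_of_nonneg_of_le_pi hs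
      linarith [Real.pi_pos]
    have ihk := ih hks
    have key : Real.sin (((k:ℝ)+1)*s) * Real.cos s - ((k:ℝ)+1)*Real.cos (((k:ℝ)+1)*s) * Real.sin s
        = Real.cos s * (Real.sin ((k:ℝ)*s) * Real.cos s - (k:ℝ)*Real.cos ((k:ℝ)*s) * Real.sin s)
          + ((k:ℝ)+1) * (Real.sin ((k:ℝ)*s) * Real.sin s ^ 2) := by
      have ha : ((k:ℝ)+1)*s = (k:ℝ)*s + s := by ring
      rw [ha, Real.sin_add, Real.cos_add]
      ring
    nlinarith [mul_nonneg hcs (sub_nonneg.mpr ihk),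
      mul_nonneg (mul_nonneg hsks (sq_nonneg (Real.sin s))) (by linarith : (0:ℝ) ≤ (k:ℝ)+1)]

/-- On `(0, π/(2m)]` we have `sin s ≤ sin α · sin(ms)`. -/
lemma ratio_ineq (m : ℕ) (hm : 2 ≤ m) (s : ℝ) (hs : 0 < s) (hsa : s ≤ π/(2*m)) :
    Real.sin s ≤ Real.sin (π/(2*m)) * Real.sin ((m:ℝ)*s) := by
  set α := π/(2*m) with hα
  have hm0 : (0:ℝ) < m := by positivity
  have hαpos : 0 < α := by positivity
  have hαlt : α ≤ π/4 := by
    rw [hα, div_le_div_iff₀ (by positivity) (by norm_num)]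
    have : (4:ℝ) ≤ 2*m := by
      have : (2:ℝ) ≤ (m:ℝ) := by exact_mod_cast hm
      linarith
    nlinarith [Real.pi_pos]
  have hmα : (m:ℝ)*α = π/2 := by
    rw [hα]; field_simp
  have hsinne : ∀ x ∈ Set.Icc s α, Real.sin x ≠ 0 := by
    intro x hx
    have h1 : 0 < x := lt_of_lt_of_le hs hx.1
    have h2 : x < π := by
      have := hx.2
      nlinarith [Real.pi_pos]
    exact ne_of_gt (Real.sin_pos_of_pos_of_lt_pi h1 h2)
  have hderiv : ∀ x : ℝ, x ∈ Set.Ioo s α → HasDerivAt (fun y => Real.sin ((m:ℝ)*y) / Real.sin y)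
      (((m:ℝ)*Real.cos ((m:ℝ)*x) * Real.sin x - Real.sin ((m:ℝ)*x) * Real.cos x)/(Real.sin x)^2) x := by
    intro x hx
    have hne : Real.sin x ≠ 0 := hsinne x ⟨le_of_lt hx.1, le_of_lt hx.2⟩
    have h1 : HasDerivAt (fun y : ℝ => Real.sin ((m:ℝ)*y)) (Real.cos ((m:ℝ)*x) * (m:ℝ)) x := by
      have hid : HasDerivAt (fun y : ℝ => (m:ℝ)*y) (m:ℝ) x := by
        simpa using (hasDerivAt_id x).const_mul (m:ℝ)
      exact hid.sin
    have := h1.div (Real.hasDerivAt_sin x) hne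
    exact this.congr_deriv (by ring)
  have hanti : AntitoneOn (fun y => Real.sin ((m:ℝ)*y) / Real.sin y) (Set.Icc s α) := by
    apply antitoneOn_of_deriv_nonpos (convex_Icc s α)
    · apply ContinuousOn.div
      · fun_prop
      · fun_prop
      · exact hsinne
    · intro x hx
      rw [interior_Icc] at hx
      exact (hderiv x hx).differentiableAt.differentiableWithinAt
    · intro x hx
      rw [interior_Icc] at hx
      rw [(hderiv x hx).deriv]
      apply div_nonpos_of_nonpos_of_nonneg
      · rw [sub_nonpos]
        have hx0 : 0 ≤ x := le_of_lt (lt_trans hs hx.1)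
        have hmx : (m:ℝ)*x ≤ π/2 := by
          rw [← hmα]
          have := le_of_lt hx.2
          nlinarith
        have := chord x hx0 m hmx
        nlinarith [this]
      · positivity
  have hmem1 : s ∈ Set.Icc s α := ⟨le_refl s, hsa⟩
  have hmem2 : α ∈ Set.Icc s α := ⟨hsa, le_refl α⟩
  have hle := hanti hmem1 hmem2 hsa
  have hma : Real.sin ((m:ℝ)*α) = 1 := by rw [hmα, Real.sin_pi_div_two]
  have hsinα : 0 < Real.sin α := by
    apply Real.sin_pos_of_pos_of_lt_pi hαpos
    nlinarith [Real.pi_pos]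
  have hsins : 0 < Real.sin s := by
    apply Real.sin_pos_of_pos_of_lt_pi hs
    nlinarith [Real.pi_pos]
  simp only [hma] at hle
  rw [div_le_div_iff₀ hsinα hsins] at hle
  nlinarith [hle]

/-- `N v = cos α (1-cos v) - sin α sin v + (sin α/m) sin(mv) ≥ 0` on `[0, α]`. -/
lemma N_nonneg (m : ℕ) (hm : 2 ≤ m) (v : ℝ) (hv : 0 ≤ v) (hva : v ≤ π/(2*m)) :
    0 ≤ Real.cos (π/(2*m))*(1 - Real.cos v) - Real.sin (π/(2*m))*Real.sin v
      + (Real.sin (π/(2*m))/m)*Real.sin ((m:ℝ)*v) := by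
  set α := π/(2*m) with hα
  have hm0 : (0:ℝ) < m := by positivity
  have hαpos : 0 < α := by positivity
  have hmα : (m:ℝ)*α = π/2 := by rw [hα]; field_simp
  set N : ℝ → ℝ := fun v => Real.cos α*(1 - Real.cos v) - Real.sin α*Real.sin v
      + (Real.sin α/m)*Real.sin ((m:ℝ)*v) with hN
  have hderiv : ∀ x : ℝ, HasDerivAt N
      (Real.cos α*Real.sin x - Real.sin α*Real.cos x + Real.sin α*Real.cos ((m:ℝ)*x)) x := by
    intro x
    have h1 : HasDerivAt (fun y : ℝ => 1 - Real.cos y) (Real.sin x) x := by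
      simpa using (Real.hasDerivAt_cos x).const_sub 1
    have h2 : HasDerivAt (fun y : ℝ => Real.sin ((m:ℝ)*y)) (Real.cos ((m:ℝ)*x) * (m:ℝ)) x := by
      have hid : HasDerivAt (fun y : ℝ => (m:ℝ)*y) (m:ℝ) x := by
        simpa using (hasDerivAt_id x).const_mul (m:ℝ)
      exact hid.sin
    have h3 := ((h1.const_mul (Real.cos α)).sub ((Real.hasDerivAt_sin x).const_mul (Real.sin α))).add
      (h2.const_mul (Real.sin α/m))
    refine h3.congr_deriv ?_
    field_simp
  have hmono : MonotoneOn N (Set.Icc 0 α) := by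
    apply monotoneOn_of_deriv_nonneg (convex_Icc 0 α)
    · apply Continuous.continuousOn
      rw [hN]; fun_prop
    · intro x hx
      exact (hderiv x).differentiableAt.differentiableWithinAt
    · intro x hx
      rw [interior_Icc] at hx
      rw [(hderiv x).deriv]
      have he : (m:ℝ)*x = π/2 - (m:ℝ)*(α-x) := by rw [mul_sub, hmα]; ring
      rw [he, Real.cos_pi_div_two_sub]
      have hratio := ratio_ineq m hm (α-x) (by linarith [hx.2]) (by rw [← hα]; linarith [hx.1])
      have hsub := Real.sin_sub α x
      linarith [hratio, hsub.symm.le, hsub.le]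
  have h0 : N 0 = 0 := by simp [hN]
  have := hmono (Set.mem_Icc.mpr ⟨le_refl 0, le_of_lt hαpos⟩) (Set.mem_Icc.mpr ⟨hv, hva⟩) hv
  rw [h0] at this
  exact this

/-- The dual function `cos α - cos θ + (sin α/m) cos(mθ)` is nonnegative everywhere. -/
lemma g_nonneg (m : ℕ) (hm : 2 ≤ m) (θ : ℝ) :
    0 ≤ Real.cos (π/(2*m)) - Real.cos θ + (Real.sin (π/(2*m))/m)*Real.cos ((m:ℝ)*θ) := by
  set α := π/(2*m) with hα
  have hm0 : (0:ℝ) < m := by positivity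
  have hαpos : 0 < α := by positivity
  have hπ := Real.pi_pos
  have hαle : α ≤ π/4 := by
    rw [hα, div_le_div_iff₀ (by positivity) (by norm_num)]
    have h2 : (2:ℝ) ≤ (m:ℝ) := by exact_mod_cast hm
    nlinarith
  have hmα : (m:ℝ)*α = π/2 := by rw [hα]; field_simp
  -- reduce θ to θ₀ ∈ [0, π] with the same cos values
  obtain ⟨θ₀, h0, hπ0, hc, hcm⟩ : ∃ θ₀, 0 ≤ θ₀ ∧ θ₀ ≤ π ∧ Real.cos θ₀ = Real.cos θ
      ∧ Real.cos ((m:ℝ)*θ₀) = Real.cos ((m:ℝ)*θ) := by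
    set k : ℤ := round (θ/(2*π)) with hk
    set x : ℝ := θ - k*(2*π) with hx
    have hbound : |x| ≤ π := by
      have h1 : |θ/(2*π) - k| ≤ 1/2 := abs_sub_round (θ/(2*π))
      have h2 : x = (θ/(2*π) - k)*(2*π) := by rw [hx]; field_simp
      rw [h2, abs_mul]
      have : |2*π| = 2*π := abs_of_pos (by positivity)
      rw [this]
      nlinarith
    refine ⟨|x|, abs_nonneg x, hbound, ?_, ?_⟩
    · rw [Real.cos_abs, hx, Real.cos_sub_int_mul_two_pi]
    · have h1 : (m:ℝ)*|x| = |(m:ℝ)*x| := by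
        rw [abs_mul, abs_of_pos hm0]
      rw [h1, Real.cos_abs]
      have h2 : (m:ℝ)*x = (m:ℝ)*θ - ((m:ℤ)*k : ℤ)*(2*π) := by
        rw [hx]; push_cast; ring
      rw [h2, Real.cos_sub_int_mul_two_pi]
    
  rw [← hc, ← hcm]
  rcases le_or_gt θ₀ α with hcase | hcase
  · -- θ₀ ∈ [0, α] : use N_nonneg with v = α - θ₀
    have hN := N_nonneg m hm (α - θ₀) (by linarith) (by rw [← hα]; linarith)
    rw [← hα] at hN
    have e1 : Real.cos θ₀ = Real.cos α * Real.cos (α - θ₀) + Real.sin α * Real.sin (α - θ₀) := by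
      have : θ₀ = α - (α - θ₀) := by ring
      rw [this, Real.cos_sub]
      ring_nf
    have e2 : Real.cos ((m:ℝ)*θ₀) = Real.sin ((m:ℝ)*(α - θ₀)) := by
      have he : (m:ℝ)*θ₀ = π/2 - (m:ℝ)*(α-θ₀) := by rw [mul_sub, hmα]; ring
      rw [he, Real.cos_pi_div_two_sub]
    rw [e1, e2]
    linarith [hN]
  · -- θ₀ ∈ [α, π] : u = θ₀ - α ∈ [0, π]
    set u : ℝ := θ₀ - α with hu
    have hu0 : 0 ≤ u := by rw [hu]; linarith
    have huπ : u ≤ π := by rw [hu]; linarith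
    have e1 : Real.cos θ₀ = Real.cos α * Real.cos u - Real.sin α * Real.sin u := by
      have : θ₀ = α + u := by rw [hu]; ring
      rw [this, Real.cos_add]
    have e2 : Real.cos ((m:ℝ)*θ₀) = -Real.sin ((m:ℝ)*u) := by
      have he : (m:ℝ)*θ₀ = π/2 + (m:ℝ)*u := by
        rw [hu, mul_sub, hmα]; ring
      rw [he, Real.cos_add]; simp
    rw [e1, e2]
    have hsinu : 0 ≤ Real.sin u := Real.sin_nonneg_of_nonneg_of_le_pi hu0 huπ
    have hsinα : 0 ≤ Real.sin α := Real.sin_nonneg_of_nonneg_of_le_pi (le_of_lt hαpos) (by linarith)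
    have hcosα : 0 ≤ Real.cos α := Real.cos_nonneg_of_mem_Icc ⟨by linarith, by linarith⟩
    have hcosu : Real.cos u ≤ 1 := Real.cos_le_one u
    have hmsin : Real.sin ((m:ℝ)*u) ≤ (m:ℝ) * Real.sin u := by
      have h1 := abs_sin_nat_mul_le m u
      have h2 : |Real.sin u| = Real.sin u := abs_of_nonneg hsinu
      rw [h2] at h1
      exact le_trans (le_abs_self _) h1
    have key1 : 0 ≤ Real.cos α * (1 - Real.cos u) := by
      apply mul_nonneg hcosα; linarith
    have key2 : 0 ≤ (Real.sin α/m) * ((m:ℝ)*Real.sin u - Real.sin ((m:ℝ)*u)) := by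
      apply mul_nonneg (by positivity); linarith
    have hfs : (Real.sin α/m) * ((m:ℝ)*Real.sin u) = Real.sin α * Real.sin u := by
      field_simp
    nlinarith [key1, key2, hfs]

lemma upper (m : ℕ) (hm : 2 ≤ m) (lam : ℝ) (S : Finset ℕ)
    (hS : ↑S ⊆ {k : ℕ | 2 ≤ k ∧ k ≠ m}) (c : ℕ → ℝ)
    (hpos : ∀ t : ℝ, 0 ≤ 1 + lam * Real.cos (2*π*t) + ∑ k ∈ S, c k * Real.cos (2*π*(k:ℝ)*t)) :
    lam ≤ 2 * Real.cos (π/(2*m)) := by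
  set α := π/(2*m) with hα
  have hm0 : (0:ℝ) < m := by positivity
  set φ : ℝ → ℝ := fun t => 1 + lam * Real.cos (2*π*t) + ∑ k ∈ S, c k * Real.cos (2*π*(k:ℝ)*t) with hφ
  have hφc : Continuous φ := by
    rw [hφ]
    apply Continuous.add
    apply Continuous.add
    · fun_prop
    · fun_prop
    · apply continuous_finset_sum
      intro k _
      fun_prop
  have hSk : ∀ k ∈ S, 2 ≤ k ∧ k ≠ m := fun k hk => hS hk
  have key : ∀ j : ℕ, ∫ t in (0:ℝ)..1, φ t * Real.cos (2*π*(j:ℝ)*t)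
      = (if 0 = j then (1:ℝ) else 0) + lam * (if 1 = j then (1/2:ℝ) else 0)
        + ∑ k ∈ S, c k * (if k = j then (1/2:ℝ) else 0) := by
    intro j
    have expand : ∀ t:ℝ, φ t * Real.cos (2*π*(j:ℝ)*t)
        = Real.cos (2*π*((0:ℕ):ℝ)*t) * Real.cos (2*π*(j:ℝ)*t)
          + lam * (Real.cos (2*π*((1:ℕ):ℝ)*t) * Real.cos (2*π*(j:ℝ)*t))
          + ∑ k ∈ S, c k * (Real.cos (2*π*(k:ℝ)*t) * Real.cos (2*π*(j:ℝ)*t)) := by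
      intro t
      rw [hφ]
      simp only [Nat.cast_zero, Nat.cast_one, mul_zero, zero_mul, Real.cos_zero, mul_one]
      rw [add_mul, add_mul, Finset.sum_mul]
      have hterm : ∀ k ∈ S, (c k * Real.cos (2*π*(k:ℝ)*t)) * Real.cos (2*π*(j:ℝ)*t)
          = c k * (Real.cos (2*π*(k:ℝ)*t) * Real.cos (2*π*(j:ℝ)*t)) := fun k _ => by ring
      rw [Finset.sum_congr rfl hterm]
      ring
    rw [intervalIntegral.integral_congr (fun t _ => expand t)]
    have hi1 : IntervalIntegrable (fun t:ℝ => Real.cos (2*π*((0:ℕ):ℝ)*t) * Real.cos (2*π*(j:ℝ)*t))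
        MeasureTheory.volume 0 1 := by apply Continuous.intervalIntegrable; fun_prop
    have hi2 : IntervalIntegrable (fun t:ℝ => lam * (Real.cos (2*π*((1:ℕ):ℝ)*t) * Real.cos (2*π*(j:ℝ)*t)))
        MeasureTheory.volume 0 1 := by apply Continuous.intervalIntegrable; fun_prop
    have hi3 : IntervalIntegrable (fun t:ℝ => ∑ k ∈ S, c k * (Real.cos (2*π*(k:ℝ)*t) * Real.cos (2*π*(j:ℝ)*t)))
        MeasureTheory.volume 0 1 := by
      apply Continuous.intervalIntegrable
      apply continuous_finset_sum
      intro k _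
      fun_prop
    rw [intervalIntegral.integral_add (hi1.add hi2) hi3, intervalIntegral.integral_add hi1 hi2]
    rw [intervalIntegral.integral_const_mul]
    rw [intervalIntegral.integral_finset_sum (fun k _ => by apply Continuous.intervalIntegrable; fun_prop)]
    have hsummand : ∀ k ∈ S, ∫ t in (0:ℝ)..1, c k * (Real.cos (2*π*(k:ℝ)*t) * Real.cos (2*π*(j:ℝ)*t))
        = c k * (if k = j then (1/2:ℝ) else 0) := by
      intro k hk
      rw [intervalIntegral.integral_const_mul, integral_cos_mul_cos]
      have : k ≠ 0 := by have := (hSk k hk).1; omega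
      simp [this]
    rw [Finset.sum_congr rfl hsummand, integral_cos_mul_cos, integral_cos_mul_cos]
    have e1 : (if 0 = j then (if (0:ℕ) = 0 then (1:ℝ) else 1/2) else 0) = (if 0 = j then (1:ℝ) else 0) := by
      simp
    have e2 : (if 1 = j then (if (1:ℕ) = 0 then (1:ℝ) else 1/2) else 0) = (if 1 = j then (1/2:ℝ) else 0) := by
      norm_num
    rw [e1, e2]
  have hI0 : ∫ t in (0:ℝ)..1, φ t * Real.cos (2*π*((0:ℕ):ℝ)*t) = 1 := by
    rw [key 0]
    rw [Finset.sum_eq_zero (fun k hk => by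
      have : k ≠ 0 := by have := (hSk k hk).1; omega
      simp [this])]
    norm_num
  have hI1 : ∫ t in (0:ℝ)..1, φ t * Real.cos (2*π*((1:ℕ):ℝ)*t) = lam/2 := by
    rw [key 1]
    rw [Finset.sum_eq_zero (fun k hk => by
      have : k ≠ 1 := by have := (hSk k hk).1; omega
      simp [this])]
    norm_num
    ring
  have hIm : ∫ t in (0:ℝ)..1, φ t * Real.cos (2*π*((m:ℕ):ℝ)*t) = 0 := by
    rw [key m]
    rw [Finset.sum_eq_zero (fun k hk => by
      have : k ≠ m := (hSk k hk).2
      simp [this])]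
    have h1 : (0:ℕ) ≠ m := by omega
    have h2 : (1:ℕ) ≠ m := by omega
    simp [h1, h2]
  -- the weight function
  set w : ℝ → ℝ := fun t => Real.cos α - Real.cos (2*π*t) + (Real.sin α/m)*Real.cos (2*π*(m:ℝ)*t) with hw
  have hwpos : ∀ t, 0 ≤ w t := by
    intro t
    have h := g_nonneg m hm (2*π*t)
    rw [show (m:ℝ)*(2*π*t) = 2*π*(m:ℝ)*t by ring] at h
    exact h
  have hint_nonneg : 0 ≤ ∫ t in (0:ℝ)..1, φ t * w t :=
    intervalIntegral.integral_nonneg (by norm_num)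
      (fun u _ => mul_nonneg (hpos u) (hwpos u))
  have hval : ∫ t in (0:ℝ)..1, φ t * w t = Real.cos α - lam/2 := by
    have hcomb : ∀ t:ℝ, φ t * w t
        = Real.cos α * (φ t * Real.cos (2*π*((0:ℕ):ℝ)*t)) - φ t * Real.cos (2*π*((1:ℕ):ℝ)*t)
          + (Real.sin α/m) * (φ t * Real.cos (2*π*((m:ℕ):ℝ)*t)) := by
      intro t
      rw [hw]
      simp only [Nat.cast_zero, Nat.cast_one, mul_zero, zero_mul, Real.cos_zero, mul_one]
      ring
    rw [intervalIntegral.integral_congr (fun t _ => hcomb t)]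
    have hj1 : IntervalIntegrable (fun t:ℝ => Real.cos α * (φ t * Real.cos (2*π*((0:ℕ):ℝ)*t)))
        MeasureTheory.volume 0 1 := (continuous_const.mul (hφc.mul (by fun_prop))).intervalIntegrable 0 1
    have hj2 : IntervalIntegrable (fun t:ℝ => φ t * Real.cos (2*π*((1:ℕ):ℝ)*t))
        MeasureTheory.volume 0 1 := (hφc.mul (by fun_prop)).intervalIntegrable 0 1
    have hj3 : IntervalIntegrable (fun t:ℝ => (Real.sin α/m) * (φ t * Real.cos (2*π*((m:ℕ):ℝ)*t)))
        MeasureTheory.volume 0 1 := (continuous_const.mul (hφc.mul (by fun_prop))).intervalIntegrable 0 1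
    rw [intervalIntegral.integral_add (hj1.sub hj2) hj3, intervalIntegral.integral_sub hj1 hj2]
    rw [intervalIntegral.integral_const_mul, intervalIntegral.integral_const_mul]
    rw [hI0, hI1, hIm]
    ring
  rw [hval] at hint_nonneg
  linarith

lemma lower_mem (m n : ℕ) (hm : 2 ≤ m) (hn : 2 ≤ n) :
    ∃ S : Finset ℕ, ↑S ⊆ {k : ℕ | 2 ≤ k ∧ k ≠ m} ∧ ∃ c : ℕ → ℝ,
      ∀ t : ℝ, 0 ≤ 1 + (2*Real.cos (π/(2*m))*(1 - 1/(n:ℝ))) * Real.cos (2*π*t) +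
        ∑ k ∈ S, c k * Real.cos (2*π*(k:ℝ)*t) := by
  set α := π/(2*m) with hα
  have hm0 : (0:ℝ) < m := by positivity
  have hn0 : (0:ℝ) < n := by positivity
  have hmα : (m:ℝ)*α = π/2 := by rw [hα]; field_simp
  refine ⟨(Finset.Ico 2 n).erase m, ?_, fun k => 2*((n:ℝ)-k)*Real.cos (k*α)/n, ?_⟩
  · intro k hk
    simp only [Finset.coe_erase, Set.mem_diff, Finset.mem_coe, Finset.mem_Ico,
      Set.mem_singleton_iff] at hk
    exact ⟨hk.1.1, hk.2⟩
  · intro t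
    set f : ℕ → ℝ := fun k => 2*((n:ℝ)-k)*(Real.cos (k*α)*Real.cos (k*(2*π*t))) with hf
    have hfe1 := fejer_expansion n (α - 2*π*t)
    have hfe2 := fejer_expansion n (α + 2*π*t)
    have hsum : ∑ k ∈ Ico 1 n, 2*((n:ℝ)-k)*Real.cos (k*(α - 2*π*t))
        + ∑ k ∈ Ico 1 n, 2*((n:ℝ)-k)*Real.cos (k*(α + 2*π*t))
        = 2 * ∑ k ∈ Ico 1 n, f k := by
      rw [Finset.mul_sum, ← Finset.sum_add_distrib]
      apply Finset.sum_congr rfl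
      intro k _
      rw [hf]
      simp only []
      rw [show (k:ℝ)*(α - 2*π*t) = (k:ℝ)*α - (k:ℝ)*(2*π*t) by ring,
        show (k:ℝ)*(α + 2*π*t) = (k:ℝ)*α + (k:ℝ)*(2*π*t) by ring,
        Real.cos_sub, Real.cos_add]
      ring
    have hP : 0 ≤ (n:ℝ) + ∑ k ∈ Ico 1 n, f k := by
      nlinarith [sq_nonneg (∑ j ∈ range n, Real.cos (j*(α - 2*π*t))),
        sq_nonneg (∑ j ∈ range n, Real.sin (j*(α - 2*π*t))),
        sq_nonneg (∑ j ∈ range n, Real.cos (j*(α + 2*π*t))),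
        sq_nonneg (∑ j ∈ range n, Real.sin (j*(α + 2*π*t)))]
    have h1mem : (1:ℕ) ∈ Finset.Ico 1 n := by
      simp only [Finset.mem_Ico]; omega
    have herase1 : (Finset.Ico 1 n).erase 1 = Finset.Ico 2 n := by
      rw [Finset.Ico_erase_left, ← Finset.Ico_add_one_left_eq_Ioo]
      rfl
    have hsplit1 : ∑ k ∈ Ico 1 n, f k = f 1 + ∑ k ∈ Ico 2 n, f k := by
      rw [← Finset.add_sum_erase _ f h1mem, herase1]
    have hsplit2 : ∑ k ∈ Ico 2 n, f k = ∑ k ∈ (Finset.Ico 2 n).erase m, f k := by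
      by_cases hmn : m ∈ Finset.Ico 2 n
      · rw [← Finset.add_sum_erase _ f hmn]
        have hfm : f m = 0 := by
          rw [hf]
          simp only []
          rw [hmα, Real.cos_pi_div_two]
          ring
        rw [hfm, zero_add]
      · rw [Finset.erase_eq_of_notMem hmn]
    have hiden : (n:ℝ) * (1 + (2*Real.cos α*(1 - 1/(n:ℝ))) * Real.cos (2*π*t)
        + ∑ k ∈ (Finset.Ico 2 n).erase m, (2*((n:ℝ)-k)*Real.cos (k*α)/n) * Real.cos (2*π*(k:ℝ)*t))
        = (n:ℝ) + ∑ k ∈ Ico 1 n, f k := by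
      rw [hsplit1, hsplit2]
      rw [mul_add, mul_add, Finset.mul_sum]
      have hterm : ∀ k ∈ (Finset.Ico 2 n).erase m,
          (n:ℝ) * ((2*((n:ℝ)-k)*Real.cos (k*α)/n) * Real.cos (2*π*(k:ℝ)*t)) = f k := by
        intro k _
        rw [hf]
        simp only []
        rw [show 2*π*(k:ℝ)*t = (k:ℝ)*(2*π*t) by ring]
        field_simp
      rw [Finset.sum_congr rfl hterm]
      have hf1 : f 1 = 2*((n:ℝ)-1)*(Real.cos α*Real.cos (2*π*t)) := by
        rw [hf]
        simp only [Nat.cast_one, one_mul]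
      rw [hf1]
      field_simp
      ring
    rw [← hiden] at hP
    exact (mul_nonneg_iff_of_pos_left hn0).mp hP

end TuranAux
/-- For `H = {k ≥ 2 : k ≠ m}`, the supremum of `λ` over nonnegative trigonometric
polynomials `1 + λ cos(2πt) + ∑_{k ∈ S} c_k cos(2πkt)` (with `S` a finite subset
of `H`) equals `2 cos(π/(2m))`. -/
theorem turanM_compl_singleton (m : ℕ) (hm : 2 ≤ m) :
    sSup {lam : ℝ | ∃ S : Finset ℕ, ↑S ⊆ {k : ℕ | 2 ≤ k ∧ k ≠ m} ∧ ∃ c : ℕ → ℝ,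
        ∀ t : ℝ, 0 ≤ 1 + lam * Real.cos (2 * π * t) +
          ∑ k ∈ S, c k * Real.cos (2 * π * k * t)}
      = 2 * Real.cos (π / (2 * m)) := by
  set A : Set ℝ := {lam : ℝ | ∃ S : Finset ℕ, ↑S ⊆ {k : ℕ | 2 ≤ k ∧ k ≠ m} ∧ ∃ c : ℕ → ℝ,
      ∀ t : ℝ, 0 ≤ 1 + lam * Real.cos (2 * π * t) +
        ∑ k ∈ S, c k * Real.cos (2 * π * k * t)} with hA
  have hub : ∀ lam ∈ A, lam ≤ 2 * Real.cos (π / (2 * m)) := by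
    rintro lam ⟨S, hS, c, hpos⟩
    exact TuranAux.upper m hm lam S hS c hpos
  apply le_antisymm
  · apply csSup_le
    · refine ⟨0, ∅, by simp, 0, fun t => ?_⟩
      simp
    · exact hub
  · have hbdd : BddAbove A := ⟨2 * Real.cos (π / (2 * m)), fun lam h => hub lam h⟩
    have hten : Filter.Tendsto (fun n : ℕ => 2 * Real.cos (π/(2*m)) * (1 - 1/(n:ℝ)))
        Filter.atTop (nhds (2 * Real.cos (π/(2*m)))) := by
      have h1 : Filter.Tendsto (fun n : ℕ => 1 - 1/(n:ℝ)) Filter.atTop (nhds 1) := by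
        simpa using (tendsto_const_nhds (x := (1:ℝ))).sub tendsto_one_div_atTop_nhds_zero_nat
      simpa using (tendsto_const_nhds (x := 2 * Real.cos (π/(2*m)))).mul h1
    apply le_of_tendsto hten
    filter_upwards [Filter.eventually_ge_atTop 2] with n hn
    exact le_csSup hbdd (TuranAux.lower_mem m n hm hn)
end

section
/- Let m = 2n be even and let φ(t) = 1 + ∑_{k=1}^{n-1} c_k cos(2πkt) be a real trigonometric polynomial of degree < n satisfying φ(j/m) ≥ 0 for all integers j. Then c_1 ≤ 1 + cos(π/n). -/
open Real

lemma cos_prod_sum (x y : ℝ) : Real.cos x * Real.cos y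
    = (Real.cos (x + y) + Real.cos (x - y)) / 2 := by
  rw [Real.cos_add, Real.cos_sub]; ring

/-- Sum of cosines over the `2n`-th roots of unity grid vanishes unless `2n ∣ r`. -/
lemma sum_cos_grid (n : ℕ) (hn : 0 < n) (r : ℤ) (hr : ¬ ((2 * (n:ℤ)) ∣ r)) :
    ∑ j ∈ Finset.range (2 * n), Real.cos (π * r * j / n) = 0 := by
  set x : ℝ := π * r / n with hx
  set ζ : ℂ := Complex.exp ((x : ℂ) * Complex.I) with hζ
  have hζ1 : ζ ≠ 1 := by
    intro h
    rw [hζ, Complex.exp_eq_one_iff] at h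
    obtain ⟨k, hk⟩ := h
    have hI : (Complex.I : ℂ) ≠ 0 := Complex.I_ne_zero
    have hx' : (x : ℂ) = k * (2 * π) := by
      have := mul_right_cancel₀ hI (hk.trans (by ring : ((k:ℂ)) * (2 * ↑π * Complex.I) = (k * (2*π)) * Complex.I))
      simpa using this
    have hxr : x = k * (2 * π) := by
      exact_mod_cast hx'
    apply hr
    refine ⟨k, ?_⟩
    have hn' : (n:ℝ) ≠ 0 := by positivity
    have hπ : π ≠ 0 := Real.pi_ne_zero
    have : π * r / n = k * (2 * π) := hxr
    have : (r : ℝ) = 2 * n * k := by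
      field_simp at this
      nlinarith [this, Real.pi_pos]
    exact_mod_cast this
  have hpow : ζ ^ (2 * n) = 1 := by
    rw [hζ, ← Complex.exp_nat_mul]
    have : ((2 * n : ℕ) : ℂ) * ((x:ℂ) * Complex.I) = (r : ℂ) * (2 * π * Complex.I) := by
      have hn' : (n:ℂ) ≠ 0 := by exact_mod_cast Nat.cast_ne_zero.mpr hn.ne'
      push_cast [hx]
      field_simp
    rw [this, Complex.exp_int_mul_two_pi_mul_I]
  have hgeom : ∑ j ∈ Finset.range (2 * n), ζ ^ j = 0 := by
    rw [geom_sum_eq hζ1, hpow]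
    simp
  have hre : ∀ j : ℕ, (ζ ^ j).re = Real.cos (π * r * j / n) := by
    intro j
    rw [hζ, ← Complex.exp_nat_mul]
    have : ((j:ℂ)) * ((x:ℂ) * Complex.I) = ((j * x : ℝ) : ℂ) * Complex.I := by
      push_cast; ring
    rw [this, Complex.exp_ofReal_mul_I_re]
    congr 1
    rw [hx]; ring
  calc ∑ j ∈ Finset.range (2 * n), Real.cos (π * r * j / n)
      = (∑ j ∈ Finset.range (2 * n), ζ ^ j).re := by
        rw [Complex.re_sum]; exact (Finset.sum_congr rfl fun j _ => (hre j).symm)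
    _ = 0 := by rw [hgeom]; rfl

lemma sum_cos_grid' (n : ℕ) (hn : 0 < n) (r : ℤ) (h0 : r ≠ 0) (h2 : |r| < 2 * n) :
    ∑ j ∈ Finset.range (2 * n), Real.cos (π * r * j / n) = 0 := by
  apply sum_cos_grid n hn r
  intro h
  have habs : (2 * (n:ℤ)) ∣ |r| := (dvd_abs _ _).mpr h
  have := Int.le_of_dvd (abs_pos.mpr h0) habs
  omega

/-- Discretized Fejér bound: if `m = 2n` and
`φ(t) = 1 + ∑_{k=1}^{n-1} c_k cos(2πkt)` satisfies `φ(j/m) ≥ 0` for all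
integers `j`, then `c_1 ≤ 1 + cos(π/n)`. -/
theorem discrete_fejer_bound (n : ℕ) (hn : 2 ≤ n) (c : ℕ → ℝ)
    (hpos : ∀ j : ℤ, 0 ≤ 1 +
      ∑ k ∈ Finset.Icc 1 (n - 1), c k * Real.cos (2 * π * k * (j / (2 * n : ℝ)))) :
    c 1 ≤ 1 + Real.cos (π / n) := by
  have hn0 : 0 < n := by omega
  have hnR : (0:ℝ) < n := by exact_mod_cast hn0
  have hnne : (n:ℝ) ≠ 0 := hnR.ne'
  set A : ℝ := (1 + Real.cos (π / n)) / 2 with hA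
  set C : ℝ := (1 - Real.cos (π / n)) / 2 with hC
  set μ : ℕ → ℝ := fun j => A - Real.cos (π * j / n) + C * Real.cos (π * j) with hμdef
  -- values of φ at grid points are nonnegative
  have hφ : ∀ j : ℕ, 0 ≤ 1 + ∑ k ∈ Finset.Icc 1 (n - 1),
      c k * Real.cos (π * k * j / n) := by
    intro j
    have := hpos (j : ℤ)
    convert this using 2
    apply Finset.sum_congr rfl
    intro k _
    congr 2
    push_cast
    field_simp
  -- the weights are nonnegative
  have hμ : ∀ j ∈ Finset.range (2 * n), 0 ≤ μ j := by
    intro j hj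
    simp only [Finset.mem_range] at hj
    rcases Nat.even_or_odd j with ⟨m, hm⟩ | ⟨m, hm⟩
    · have h1 : Real.cos (π * j) = 1 := by
        rw [hm]
        have : π * (m + m : ℕ) = (m:ℝ) * (2 * π) := by push_cast; ring
        rw [this, Real.cos_nat_mul_two_pi]
      have h2 : Real.cos (π * j / n) ≤ 1 := Real.cos_le_one _
      simp only [hμdef, h1, hA, hC]
      linarith
    · have h1 : Real.cos (π * j) = -1 := by
        rw [hm]
        have : π * (2 * m + 1 : ℕ) = (m:ℝ) * (2 * π) + π := by push_cast; ring
        rw [this, Real.cos_nat_mul_two_pi_add_pi]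
      have h2 : Real.cos (π * j / n) ≤ Real.cos (π / n) := by
        rcases le_or_gt j n with hjn | hjn
        · apply Real.cos_le_cos_of_nonneg_of_le_pi
          · positivity
          · rw [div_le_iff₀ hnR]
            have hje : (j:ℝ) ≤ n := by exact_mod_cast hjn
            nlinarith [Real.pi_pos]
          · rw [div_le_div_iff₀ hnR hnR]
            have h1j : (1:ℝ) ≤ j := by
              have : 1 ≤ j := by omega
              exact_mod_cast this
            nlinarith [Real.pi_pos, mul_nonneg (mul_nonneg Real.pi_pos.le hnR.le)
              (sub_nonneg.mpr h1j)]
        · have hrefl : Real.cos (π * j / n) = Real.cos (π * (2 * n - j : ℕ) / n) := by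
            have hjle : j ≤ 2 * n := hj.le
            have hc : (π * (2 * n - j : ℕ) / n : ℝ) = (1:ℤ) * (2 * π) - π * j / n := by
              rw [Nat.cast_sub hjle]
              push_cast
              field_simp
            rw [hc, Real.cos_int_mul_two_pi_sub]
          rw [hrefl]
          apply Real.cos_le_cos_of_nonneg_of_le_pi
          · positivity
          · rw [div_le_iff₀ hnR]
            have hle : ((2 * n - j : ℕ) : ℝ) ≤ n := by
              have : 2 * n - j ≤ n := by omega
              exact_mod_cast this
            nlinarith [Real.pi_pos]
          · rw [div_le_div_iff₀ hnR hnR]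
            have h1j : (1:ℝ) ≤ ((2 * n - j : ℕ) : ℝ) := by
              have : 1 ≤ 2 * n - j := by omega
              exact_mod_cast this
            nlinarith [Real.pi_pos, mul_nonneg (mul_nonneg Real.pi_pos.le hnR.le)
              (sub_nonneg.mpr h1j)]
      simp only [hμdef, h1, hA, hC]
      linarith
  -- nonnegativity of the weighted sum
  have hS : 0 ≤ ∑ j ∈ Finset.range (2 * n), μ j *
      (1 + ∑ k ∈ Finset.Icc 1 (n - 1), c k * Real.cos (π * k * j / n)) :=
    Finset.sum_nonneg fun j hj => mul_nonneg (hμ j hj) (hφ j)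
  -- basic grid sums
  have hsum1 : ∑ j ∈ Finset.range (2 * n), Real.cos (π * j / n) = 0 := by
    have h := sum_cos_grid' n hn0 1 one_ne_zero (by rw [abs_one]; omega)
    rw [← h]
    refine Finset.sum_congr rfl fun j _ => ?_
    congr 1
    push_cast
    ring
  have hsumn : ∑ j ∈ Finset.range (2 * n), Real.cos (π * j) = 0 := by
    have h := sum_cos_grid' n hn0 n (by exact_mod_cast hn0.ne') (by
      rw [abs_of_nonneg (by positivity)]; omega)
    rw [← h]
    refine Finset.sum_congr rfl fun j _ => ?_
    congr 1
    push_cast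
    field_simp
  have hμsum : ∑ j ∈ Finset.range (2 * n), μ j = (n:ℝ) * (1 + Real.cos (π / n)) := by
    simp only [hμdef]
    rw [Finset.sum_add_distrib, Finset.sum_sub_distrib, ← Finset.mul_sum, Finset.sum_const,
      Finset.card_range, hsum1, hsumn, hA]
    push_cast
    ring
  -- the weighted cosine sums
  have hW : ∀ k ∈ Finset.Icc 1 (n - 1), ∑ j ∈ Finset.range (2 * n),
      μ j * Real.cos (π * k * j / n) = if k = 1 then -(n:ℝ) else 0 := by
    intro k hk
    simp only [Finset.mem_Icc] at hk
    obtain ⟨hk1, hk2⟩ := hk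
    have hkn' : k < n := by omega
    have e1 : ∑ j ∈ Finset.range (2 * n), Real.cos (π * (k:ℝ) * j / n) = 0 := by
      have h := sum_cos_grid' n hn0 k (by exact_mod_cast (by omega : k ≠ 0))
        (by rw [abs_of_nonneg (by positivity)]; omega)
      rw [← h]
      norm_cast
    have e2 : ∑ j ∈ Finset.range (2 * n), Real.cos (π * ((k:ℝ) + 1) * j / n) = 0 := by
      have h := sum_cos_grid' n hn0 ((k:ℤ) + 1) (by omega)
        (by rw [abs_of_nonneg (by omega)]; omega)
      rw [← h]
      refine Finset.sum_congr rfl fun j _ => ?_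
      congr 1
      push_cast
      ring
    have e3 : ∑ j ∈ Finset.range (2 * n), Real.cos (π * ((k:ℝ) - 1) * j / n)
        = if k = 1 then (2 * n : ℝ) else 0 := by
      rcases eq_or_ne k 1 with h | h
      · subst h
        rw [if_pos rfl,
          Finset.sum_congr rfl (fun j _ => by norm_num :
            ∀ j ∈ Finset.range (2 * n), Real.cos (π * (((1:ℕ):ℝ) - 1) * j / n) = 1),
          Finset.sum_const, Finset.card_range]
        push_cast
        ring
      · rw [if_neg h]
        have h' := sum_cos_grid' n hn0 ((k:ℤ) - 1) (by omega)
          (by rw [abs_of_nonneg (by omega)]; omega)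
        rw [← h']
        refine Finset.sum_congr rfl fun j _ => ?_
        congr 1
        push_cast
        ring
    have e4 : ∑ j ∈ Finset.range (2 * n), Real.cos (π * ((k:ℝ) + n) * j / n) = 0 := by
      have h := sum_cos_grid' n hn0 ((k:ℤ) + n) (by omega)
        (by rw [abs_of_nonneg (by omega)]; omega)
      rw [← h]
      refine Finset.sum_congr rfl fun j _ => ?_
      congr 1
      push_cast
      ring
    have e5 : ∑ j ∈ Finset.range (2 * n), Real.cos (π * ((k:ℝ) - n) * j / n) = 0 := by
      have h := sum_cos_grid' n hn0 ((k:ℤ) - n) (by omega)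
        (by rw [abs_of_nonpos (by omega)]; omega)
      rw [← h]
      refine Finset.sum_congr rfl fun j _ => ?_
      congr 1
      push_cast
      ring
    have expand : ∀ j ∈ Finset.range (2 * n), μ j * Real.cos (π * k * j / n)
        = A * Real.cos (π * (k:ℝ) * j / n)
          - (Real.cos (π * ((k:ℝ) + 1) * j / n) + Real.cos (π * ((k:ℝ) - 1) * j / n)) / 2
          + C * ((Real.cos (π * ((k:ℝ) + n) * j / n)
              + Real.cos (π * ((k:ℝ) - n) * j / n)) / 2) := by
      intro j _
      have p1 : Real.cos (π * j / n) * Real.cos (π * (k:ℝ) * j / n)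
          = (Real.cos (π * ((k:ℝ) + 1) * j / n) + Real.cos (π * ((k:ℝ) - 1) * j / n)) / 2 := by
        rw [mul_comm, cos_prod_sum]
        congr 3
        · field_simp
        · field_simp
      have p2 : Real.cos (π * j) * Real.cos (π * (k:ℝ) * j / n)
          = (Real.cos (π * ((k:ℝ) + n) * j / n) + Real.cos (π * ((k:ℝ) - n) * j / n)) / 2 := by
        rw [mul_comm, cos_prod_sum]
        congr 3
        · field_simp
        · field_simp
      have hexp : μ j * Real.cos (π * (k:ℝ) * j / n)
          = A * Real.cos (π * (k:ℝ) * j / n)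
            - Real.cos (π * j / n) * Real.cos (π * (k:ℝ) * j / n)
            + C * (Real.cos (π * j) * Real.cos (π * (k:ℝ) * j / n)) := by
        simp only [hμdef]
        ring
      rw [hexp, p1, p2]
    rw [Finset.sum_congr rfl expand, Finset.sum_add_distrib, Finset.sum_sub_distrib,
      ← Finset.mul_sum, ← Finset.mul_sum, e1]
    have hsplit1 : ∑ j ∈ Finset.range (2 * n),
        (Real.cos (π * ((k:ℝ) + 1) * j / n) + Real.cos (π * ((k:ℝ) - 1) * j / n)) / 2
        = (if k = 1 then (2 * n : ℝ) else 0) / 2 := by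
      rw [← Finset.sum_div, Finset.sum_add_distrib, e2, e3, zero_add]
    have hsplit2 : ∑ j ∈ Finset.range (2 * n),
        (Real.cos (π * ((k:ℝ) + n) * j / n) + Real.cos (π * ((k:ℝ) - n) * j / n)) / 2 = 0 := by
      rw [← Finset.sum_div, Finset.sum_add_distrib, e4, e5]
      norm_num
    rw [hsplit1, hsplit2]
    split_ifs with h
    · ring
    · ring
  -- expand the weighted sum
  have key : ∑ j ∈ Finset.range (2 * n), μ j *
      (1 + ∑ k ∈ Finset.Icc 1 (n - 1), c k * Real.cos (π * k * j / n))
      = (n:ℝ) * (1 + Real.cos (π / n)) - (n:ℝ) * c 1 := by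
    have step : ∀ j ∈ Finset.range (2 * n), μ j *
        (1 + ∑ k ∈ Finset.Icc 1 (n - 1), c k * Real.cos (π * k * j / n))
        = μ j + ∑ k ∈ Finset.Icc 1 (n - 1), c k * (μ j * Real.cos (π * k * j / n)) := by
      intro j _
      rw [mul_add, mul_one, Finset.mul_sum]
      congr 1
      exact Finset.sum_congr rfl fun k _ => by ring
    rw [Finset.sum_congr rfl step, Finset.sum_add_distrib, hμsum, Finset.sum_comm]
    have inner : ∑ k ∈ Finset.Icc 1 (n - 1), ∑ j ∈ Finset.range (2 * n),
        c k * (μ j * Real.cos (π * k * j / n)) = -(n:ℝ) * c 1 := by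
      have step2 : ∀ k ∈ Finset.Icc 1 (n - 1), ∑ j ∈ Finset.range (2 * n),
          c k * (μ j * Real.cos (π * k * j / n))
          = c k * (if k = 1 then -(n:ℝ) else 0) := by
        intro k hk
        rw [← Finset.mul_sum, hW k hk]
      rw [Finset.sum_congr rfl step2,
        Finset.sum_eq_single_of_mem 1 (Finset.mem_Icc.mpr ⟨le_refl 1, by omega⟩)
          (fun b _ hb => by rw [if_neg hb, mul_zero]), if_pos rfl]
      ring
    rw [inner]
    ring
  rw [key] at hS
  nlinarith [hS, hnR]
end
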